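/- arXiv:1602.00042 — 5 statements merged into one kernel-verified Lean document; each statement's English description precedes it below -/
import Mathlib

section
/- Let L>0 and let Ω=(0,L)×(-1,1). Suppose u=(u₁,u₂) is a continuously differentiable vector field on a neighborhood of the closure of Ω which is divergence-free (∂₁u₁+∂₂u₂=0 on Ω), satisfies u₂(x₁,0)=0 for all x₁∈(0,L), and satisfies the symmetries u₁(x₁,-x₂)=u₁(x₁,x₂) and u₂(x₁,-x₂)=-u₂(x₁,x₂) for (x₁,x₂)∈(0,L)×(0,1). Then ∫_Ω |u₂(x)|² dx ≤ ∫_Ω |∇u₁(x)|² dx. -/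
open MeasureTheory Real Filter

noncomputable section

/-- First partial derivative. -/
def d1 (f : ℝ × ℝ → ℝ) (p : ℝ × ℝ) : ℝ := fderiv ℝ f p (1, 0)

/-- Second partial derivative. -/
def d2 (f : ℝ × ℝ → ℝ) (p : ℝ × ℝ) : ℝ := fderiv ℝ f p (0, 1)

/-- Laplacian. -/
def lap (f : ℝ × ℝ → ℝ) (p : ℝ × ℝ) : ℝ := d1 (d1 f) p + d2 (d2 f) p

/-- The domain Ω = (0,L) × (-1,1). -/
def Omg (L : ℝ) : Set (ℝ × ℝ) := Set.Ioo 0 L ×ˢ Set.Ioo (-1) 1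

/-- Squared L² norm over Ω. -/
def nrmSq (L : ℝ) (f : ℝ × ℝ → ℝ) : ℝ := ∫ p in Omg L, (f p) ^ 2

/-- L² norm over Ω. -/
def nrm (L : ℝ) (f : ℝ × ℝ → ℝ) : ℝ := Real.sqrt (nrmSq L f)

/-- Squared L² norm of the gradient over Ω. -/
def gradNrmSq (L : ℝ) (f : ℝ × ℝ → ℝ) : ℝ := ∫ p in Omg L, ((d1 f p) ^ 2 + (d2 f p) ^ 2)

/-- L² norm of the gradient over Ω. -/
def gradNrm (L : ℝ) (f : ℝ × ℝ → ℝ) : ℝ := Real.sqrt (gradNrmSq L f)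

/-- Squared L² norm of the Laplacian over Ω. -/
def lapNrmSq (L : ℝ) (f : ℝ × ℝ → ℝ) : ℝ := ∫ p in Omg L, (lap f p) ^ 2

/-- L² norm of the Laplacian over Ω. -/
def lapNrm (L : ℝ) (f : ℝ × ℝ → ℝ) : ℝ := Real.sqrt (lapNrmSq L f)

/-- Ω-periodic: L-periodic in x₁ and 2-periodic in x₂. -/
def OmgPeriodic (L : ℝ) (f : ℝ × ℝ → ℝ) : Prop :=
  (∀ x y : ℝ, f (x + L, y) = f (x, y)) ∧ (∀ x y : ℝ, f (x, y + 2) = f (x, y))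

/-- Divergence-free vector field. -/
def DivFree (u₁ u₂ : ℝ × ℝ → ℝ) : Prop := ∀ p, d1 u₁ p + d2 u₂ p = 0

/-- Symmetric vector field: first component even in x₂, second odd in x₂. -/
def Symm (u₁ u₂ : ℝ × ℝ → ℝ) : Prop :=
  (∀ x y : ℝ, u₁ (x, -y) = u₁ (x, y)) ∧ (∀ x y : ℝ, u₂ (x, -y) = -u₂ (x, y))


/-- Cauchy–Schwarz for set integrals on ℝ. -/
private lemma cs_setIntegral' {S : Set ℝ} (hμ : volume S ≠ ⊤) {f : ℝ → ℝ}
    (h1 : IntegrableOn f S) (h2 : IntegrableOn (fun t => f t ^ 2) S) :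
    (∫ t in S, f t) ^ 2 ≤ (volume S).toReal * ∫ t in S, f t ^ 2 := by
  set m := (volume S).toReal with hmdef
  set I := ∫ t in S, f t with hI
  set J := ∫ t in S, f t ^ 2 with hJ
  have hm0 : 0 ≤ m := ENNReal.toReal_nonneg
  have hexp : ∫ t in S, (m * f t - I) ^ 2 = m ^ 2 * J - (2 * m * I) * I + I ^ 2 * m := by
    have h3 : IntegrableOn (fun t => m ^ 2 * f t ^ 2 - (2 * m * I) * f t) S :=
      (h2.const_mul _).sub (h1.const_mul _)
    have h4 : IntegrableOn (fun _ : ℝ => I ^ 2) S := integrableOn_const hμ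
    calc ∫ t in S, (m * f t - I) ^ 2
        = ∫ t in S, (m ^ 2 * f t ^ 2 - (2 * m * I) * f t + I ^ 2) := by
          congr 1; funext t; ring
      _ = (∫ t in S, (m ^ 2 * f t ^ 2 - (2 * m * I) * f t)) + ∫ _ in S, (I ^ 2 : ℝ) :=
          integral_add h3 h4
      _ = m ^ 2 * J - (2 * m * I) * I + I ^ 2 * m := by
          rw [integral_sub (h2.const_mul _) (h1.const_mul _), integral_const_mul,
            integral_const_mul, setIntegral_const, smul_eq_mul, measureReal_def, ← hmdef, ← hI, ← hJ]
          ring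
  have hkey : 0 ≤ m ^ 2 * J - (2 * m * I) * I + I ^ 2 * m := by
    rw [← hexp]; exact integral_nonneg fun t => sq_nonneg _
  rcases eq_or_lt_of_le hm0 with h | h
  · have hS0 : volume S = 0 := by
      rcases (ENNReal.toReal_eq_zero_iff _).1 h.symm with h' | h'
      · exact h'
      · exact absurd h' hμ
    have hI0 : I = 0 := by
      rw [hI, Measure.restrict_eq_zero.2 hS0, integral_zero_measure]
    rw [hI0, ← h]; simp
  · nlinarith [hkey, h]

private lemma integral_abs_Ioo' : ∫ y in Set.Ioo (-1:ℝ) 1, |y| = 1 := by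
  rw [setIntegral_congr_set MeasureTheory.Ioo_ae_eq_Ioc,
    ← intervalIntegral.integral_of_le (by norm_num : (-1:ℝ) ≤ 1)]
  have hii : ∀ a b : ℝ, IntervalIntegrable (fun y : ℝ => |y|) volume a b :=
    fun a b => continuous_abs.intervalIntegrable a b
  rw [← intervalIntegral.integral_add_adjacent_intervals (b := (0:ℝ)) (hii _ _) (hii _ _)]
  have h1 : ∫ y in (-1:ℝ)..0, |y| = 1 / 2 := by
    rw [intervalIntegral.integral_congr (g := fun y : ℝ => -y)
      (fun y hy => abs_of_nonpos (by
        rw [Set.uIcc_of_le (by norm_num : (-1:ℝ) ≤ 0)] at hy; exact hy.2)),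
      intervalIntegral.integral_neg, integral_id]
    norm_num
  have h2 : ∫ y in (0:ℝ)..1, |y| = 1 / 2 := by
    rw [intervalIntegral.integral_congr (g := fun y : ℝ => y)
      (fun y hy => abs_of_nonneg (by
        rw [Set.uIcc_of_le (by norm_num : (0:ℝ) ≤ 1)] at hy; exact hy.1)),
      integral_id]
    norm_num
  rw [h1, h2]; norm_num

set_option maxHeartbeats 1000000 in
/-- Lemma 2.5 of the paper. If `u = (u₁, u₂)` is a C¹ divergence-free vector
field on a neighborhood of the closure of `Ω = (0,L) × (-1,1)` with `u₂(x₁,0) = 0`,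
`u₁` even and `u₂` odd across `x₂ = 0`, then `‖u₂‖_{L²(Ω)}² ≤ ‖∇u₁‖_{L²(Ω)}²`. -/
theorem vertical_component_bound (L : ℝ) (hL : 0 < L) (u₁ u₂ : ℝ × ℝ → ℝ)
    (U : Set (ℝ × ℝ)) (hU : IsOpen U) (hUc : closure (Omg L) ⊆ U)
    (hu₁ : ContDiffOn ℝ 1 u₁ U) (hu₂ : ContDiffOn ℝ 1 u₂ U)
    (hdiv : ∀ p ∈ Omg L, d1 u₁ p + d2 u₂ p = 0)
    (hbc : ∀ x ∈ Set.Ioo (0 : ℝ) L, u₂ (x, 0) = 0)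
    (hsym1 : ∀ x ∈ Set.Ioo (0 : ℝ) L, ∀ y ∈ Set.Ioo (0 : ℝ) 1, u₁ (x, -y) = u₁ (x, y))
    (hsym2 : ∀ x ∈ Set.Ioo (0 : ℝ) L, ∀ y ∈ Set.Ioo (0 : ℝ) 1, u₂ (x, -y) = -u₂ (x, y)) :
    nrmSq L u₂ ≤ gradNrmSq L u₁ := by
  classical
  set s : Set ℝ := Set.Ioo (0:ℝ) L with hs
  set t : Set ℝ := Set.Ioo (-1:ℝ) 1 with ht
  set K : Set (ℝ × ℝ) := Set.Icc (0:ℝ) L ×ˢ Set.Icc (-1:ℝ) 1 with hK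
  have hOmg : Omg L = s ×ˢ t := rfl
  have hcl : closure (Omg L) = K := by
    rw [Omg, closure_prod_eq, closure_Ioo hL.ne, closure_Ioo (by norm_num : (-1:ℝ) ≠ 1)]
  have hclsub : K ⊆ U := hcl ▸ hUc
  have hcpt : IsCompact K := isCompact_Icc.prod isCompact_Icc
  have hsub : s ×ˢ t ⊆ K :=
    Set.prod_mono Set.Ioo_subset_Icc_self Set.Ioo_subset_Icc_self
  -- continuity of derivatives
  have hc1 : ContinuousOn (d1 u₁) U :=
    (hu₁.continuousOn_fderiv_of_isOpen hU le_rfl).clm_apply continuousOn_const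
  have hc2 : ContinuousOn (d2 u₁) U :=
    (hu₁.continuousOn_fderiv_of_isOpen hU le_rfl).clm_apply continuousOn_const
  have hc3 : ContinuousOn (d2 u₂) U :=
    (hu₂.continuousOn_fderiv_of_isOpen hU le_rfl).clm_apply continuousOn_const
  -- integrability on K
  have hIu₂sq : IntegrableOn (fun p => u₂ p ^ 2) K :=
    ((hu₂.continuousOn.mono hclsub).pow 2).integrableOn_compact hcpt
  have hIg2 : IntegrableOn (fun p => d1 u₁ p ^ 2) K :=
    ((hc1.mono hclsub).pow 2).integrableOn_compact hcpt
  have hId2 : IntegrableOn (fun p => d2 u₁ p ^ 2) K :=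
    ((hc2.mono hclsub).pow 2).integrableOn_compact hcpt
  -- Fubini helpers
  have fub : ∀ (f : ℝ × ℝ → ℝ), IntegrableOn f (s ×ˢ t) →
      ∫ p in s ×ˢ t, f p = ∫ x in s, ∫ y in t, f (x, y) := by
    intro f hf
    rw [Measure.volume_eq_prod ℝ ℝ] at hf ⊢
    exact setIntegral_prod f hf
  have marg : ∀ (f : ℝ × ℝ → ℝ), IntegrableOn f (s ×ˢ t) →
      IntegrableOn (fun x => ∫ y in t, f (x, y)) s := by
    intro f hf
    rw [Measure.volume_eq_prod ℝ ℝ, IntegrableOn, ← Measure.prod_restrict] at hf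
    exact hf.integral_prod_left
  -- slice helpers
  have hmemU : ∀ x ∈ s, ∀ r ∈ Set.Icc (-1:ℝ) 1, ((x, r) : ℝ × ℝ) ∈ U := by
    intro x hx r hr
    exact hclsub ⟨⟨hx.1.le, hx.2.le⟩, hr⟩
  have slice_cont : ∀ (f : ℝ × ℝ → ℝ), ContinuousOn f U → ∀ x ∈ s,
      ContinuousOn (fun r => f (x, r)) (Set.Icc (-1:ℝ) 1) := by
    intro f hf x hx
    exact hf.comp (Continuous.continuousOn (continuous_const.prodMk continuous_id)) (fun r hr => hmemU x hx r hr)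
  -- pointwise bound
  have pointwise : ∀ x ∈ s, ∀ y ∈ t, u₂ (x, y) ^ 2 ≤ |y| * (∫ z in t, d1 u₁ (x, z) ^ 2) := by
    intro x hx y hy
    have hgc : ContinuousOn (fun r => d1 u₁ (x, r)) (Set.Icc (-1:ℝ) 1) :=
      slice_cont _ hc1 x hx
    have hIg : IntegrableOn (fun r => d1 u₁ (x, r)) (Set.Icc (-1:ℝ) 1) :=
      hgc.integrableOn_compact isCompact_Icc
    have hIgsq : IntegrableOn (fun r => d1 u₁ (x, r) ^ 2) (Set.Icc (-1:ℝ) 1) :=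
      (hgc.pow 2).integrableOn_compact isCompact_Icc
    have huIcc : Set.uIcc (0:ℝ) y ⊆ Set.Icc (-1:ℝ) 1 := by
      rcases le_total (0:ℝ) y with h | h
      · rw [Set.uIcc_of_le h]
        exact Set.Icc_subset_Icc (by norm_num) hy.2.le
      · rw [Set.uIcc_of_ge h]
        exact Set.Icc_subset_Icc hy.1.le (by norm_num)
    have hasd : ∀ r ∈ Set.uIcc (0:ℝ) y, HasDerivAt (fun r => u₂ (x, r)) (d2 u₂ (x, r)) r := by
      intro r hr
      have hd : DifferentiableAt ℝ u₂ (x, r) :=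
        (hu₂.differentiableOn one_ne_zero).differentiableAt (hU.mem_nhds (hmemU x hx r (huIcc hr)))
      have hψ : HasDerivAt (fun r : ℝ => ((x, r) : ℝ × ℝ)) ((0 : ℝ), (1 : ℝ)) r :=
        (hasDerivAt_const r x).prodMk (hasDerivAt_id r)
      exact hd.hasFDerivAt.comp_hasDerivAt r hψ
    have hInt : IntervalIntegrable (fun r => d2 u₂ (x, r)) volume 0 y :=
      ((slice_cont _ hc3 x hx).mono huIcc).intervalIntegrable
    have hftc : ∫ r in (0:ℝ)..y, d2 u₂ (x, r) = u₂ (x, y) :=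
      by rw [intervalIntegral.integral_eq_sub_of_hasDerivAt hasd hInt, hbc x hx, sub_zero]
    have huIccO : Set.uIcc (0:ℝ) y ⊆ t := by
      rcases le_total (0:ℝ) y with h | h
      · rw [Set.uIcc_of_le h]
        exact fun r hr => ⟨by norm_num; linarith [hr.1], lt_of_le_of_lt hr.2 hy.2⟩
      · rw [Set.uIcc_of_ge h]
        exact fun r hr => ⟨lt_of_lt_of_le hy.1 hr.1, by linarith [hr.2]⟩
    have hcongr : ∫ r in (0:ℝ)..y, d2 u₂ (x, r) = ∫ r in (0:ℝ)..y, -d1 u₁ (x, r) := by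
      apply intervalIntegral.integral_congr
      intro r hr
      have : ((x, r) : ℝ × ℝ) ∈ Omg L := ⟨hx, huIccO hr⟩
      have := hdiv _ this
      simp only at this ⊢
      linarith
    have hsq : u₂ (x, y) ^ 2 = (∫ r in (0:ℝ)..y, d1 u₁ (x, r)) ^ 2 := by
      rw [← hftc, hcongr, intervalIntegral.integral_neg, neg_pow]
      ring
    rcases le_total (0:ℝ) y with h | h
    · -- y ≥ 0
      have hSsub : Set.Ioc (0:ℝ) y ⊆ t := fun r hr =>
        ⟨by linarith [hr.1], lt_of_le_of_lt hr.2 hy.2⟩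
      have hSsub' : Set.Ioc (0:ℝ) y ⊆ Set.Icc (-1:ℝ) 1 := fun r hr =>
        ⟨by linarith [hr.1], by linarith [hr.2, hy.2.le]⟩
      have hvol : (volume (Set.Ioc (0:ℝ) y)).toReal = y := by
        rw [Real.volume_Ioc, ENNReal.toReal_ofReal (by linarith)]
        ring
      have hcs := cs_setIntegral' (by rw [Real.volume_Ioc]; exact ENNReal.ofReal_ne_top)
        (hIg.mono_set hSsub') (hIgsq.mono_set hSsub')
      rw [hvol] at hcs
      have hmono : ∫ r in Set.Ioc (0:ℝ) y, d1 u₁ (x, r) ^ 2 ≤ (∫ z in t, d1 u₁ (x, z) ^ 2) := by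
        apply setIntegral_mono_set (hIgsq.mono_set Set.Ioo_subset_Icc_self)
          (Eventually.of_forall fun r => sq_nonneg _)
          (HasSubset.Subset.eventuallyLE hSsub)
      calc u₂ (x, y) ^ 2 = (∫ r in Set.Ioc (0:ℝ) y, d1 u₁ (x, r)) ^ 2 := by
            rw [hsq, intervalIntegral.integral_of_le h]
        _ ≤ y * ∫ r in Set.Ioc (0:ℝ) y, d1 u₁ (x, r) ^ 2 := hcs
        _ ≤ |y| * (∫ z in t, d1 u₁ (x, z) ^ 2) := by
            rw [abs_of_nonneg h]
            exact mul_le_mul_of_nonneg_left hmono h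
    · -- y ≤ 0
      have hSsub : Set.Ioc y (0:ℝ) ⊆ t := fun r hr =>
        ⟨hy.1.trans hr.1, by linarith [hr.2]⟩
      have hSsub' : Set.Ioc y (0:ℝ) ⊆ Set.Icc (-1:ℝ) 1 := fun r hr =>
        ⟨by linarith [hr.1, hy.1.le], by linarith [hr.2]⟩
      have hvol : (volume (Set.Ioc y (0:ℝ))).toReal = -y := by
        rw [Real.volume_Ioc, ENNReal.toReal_ofReal (by linarith)]
        ring
      have hcs := cs_setIntegral' (by rw [Real.volume_Ioc]; exact ENNReal.ofReal_ne_top)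
        (hIg.mono_set hSsub') (hIgsq.mono_set hSsub')
      rw [hvol] at hcs
      have hmono : ∫ r in Set.Ioc y (0:ℝ), d1 u₁ (x, r) ^ 2 ≤ (∫ z in t, d1 u₁ (x, z) ^ 2) := by
        apply setIntegral_mono_set (hIgsq.mono_set Set.Ioo_subset_Icc_self)
          (Eventually.of_forall fun r => sq_nonneg _)
          (HasSubset.Subset.eventuallyLE hSsub)
      calc u₂ (x, y) ^ 2 = (∫ r in Set.Ioc y (0:ℝ), d1 u₁ (x, r)) ^ 2 := by
            rw [hsq, intervalIntegral.integral_of_ge h, neg_pow]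
            ring
        _ ≤ (-y) * ∫ r in Set.Ioc y (0:ℝ), d1 u₁ (x, r) ^ 2 := hcs
        _ ≤ |y| * (∫ z in t, d1 u₁ (x, z) ^ 2) := by
            rw [abs_of_nonpos h]
            exact mul_le_mul_of_nonneg_left hmono (by linarith)
  -- inner integral bound
  have inner_bound : ∀ x ∈ s, ∫ y in t, u₂ (x, y) ^ 2 ≤ (∫ z in t, d1 u₁ (x, z) ^ 2) := by
    intro x hx
    have hint1 : IntegrableOn (fun y => u₂ (x, y) ^ 2) t :=
      (((slice_cont _ hu₂.continuousOn x hx).pow 2).integrableOn_compact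
        isCompact_Icc).mono_set Set.Ioo_subset_Icc_self
    have hint2 : IntegrableOn (fun y : ℝ => |y| * (∫ z in t, d1 u₁ (x, z) ^ 2)) t :=
      ((continuous_abs.mul continuous_const).integrableOn_Icc).mono_set
        Set.Ioo_subset_Icc_self
    calc ∫ y in t, u₂ (x, y) ^ 2 ≤ ∫ y in t, |y| * (∫ z in t, d1 u₁ (x, z) ^ 2) :=
          setIntegral_mono_on hint1 hint2 measurableSet_Ioo (fun y hy => pointwise x hx y hy)
      _ = (∫ y in t, |y|) * (∫ z in t, d1 u₁ (x, z) ^ 2) := by rw [integral_mul_const]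
      _ = (∫ z in t, d1 u₁ (x, z) ^ 2) := by rw [ht, integral_abs_Ioo', one_mul]
  -- assemble
  have hIN : IntegrableOn (fun x => ∫ y in t, u₂ (x, y) ^ 2) s :=
    marg (fun p => u₂ p ^ 2) (hIu₂sq.mono_set hsub)
  have hIG : IntegrableOn (fun x => ∫ z in t, d1 u₁ (x, z) ^ 2) s := marg (fun p => d1 u₁ p ^ 2) (hIg2.mono_set hsub)
  calc nrmSq L u₂ = ∫ x in s, ∫ y in t, u₂ (x, y) ^ 2 := by
        rw [nrmSq, hOmg]; exact fub (fun p => u₂ p ^ 2) (hIu₂sq.mono_set hsub)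
    _ ≤ ∫ x in s, ∫ z in t, d1 u₁ (x, z) ^ 2 :=
        setIntegral_mono_on hIN hIG measurableSet_Ioo inner_bound
    _ = ∫ p in s ×ˢ t, d1 u₁ p ^ 2 := (fub (fun p => d1 u₁ p ^ 2) (hIg2.mono_set hsub)).symm
    _ ≤ ∫ p in s ×ˢ t, (d1 u₁ p ^ 2 + d2 u₁ p ^ 2) := by
        apply setIntegral_mono (hIg2.mono_set hsub)
          ((hIg2.mono_set hsub).add (hId2.mono_set hsub))
        intro p
        exact le_add_of_nonneg_right (sq_nonneg _)
    _ = gradNrmSq L u₁ := by rw [gradNrmSq, hOmg]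
end
end

section
/- Let L>0. Suppose u=(u₁,u₂) is a continuously differentiable vector field on a neighborhood of [0,L]×[0,1] which is divergence-free (∂₁u₁+∂₂u₂=0) and satisfies u₂(x₁,0)=0 for all x₁∈[0,L]. Then for every (x₁,x₂)∈[0,L]×[0,1], |u₂(x₁,x₂)|² ≤ ∫₀¹ |∂₁u₁(x₁,s)|² ds. -/
open MeasureTheory Real Filter

noncomputable section

/-- pointwise bound on the vertical component of a divergence-free C¹ vector
field vanishing on `{x₂ = 0}`:  `|u₂(x₁,x₂)|² ≤ ∫₀¹ |∂₁u₁(x₁,s)|² ds`. -/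
theorem pointwise_vertical_bound (L : ℝ) (hL : 0 < L) (u₁ u₂ : ℝ × ℝ → ℝ)
    (U : Set (ℝ × ℝ)) (hU : IsOpen U)
    (hUc : (Set.Icc (0 : ℝ) L ×ˢ Set.Icc (0 : ℝ) 1) ⊆ U)
    (hu₁ : ContDiffOn ℝ 1 u₁ U) (hu₂ : ContDiffOn ℝ 1 u₂ U)
    (hdiv : ∀ p ∈ U, d1 u₁ p + d2 u₂ p = 0)
    (hbc : ∀ x ∈ Set.Icc (0 : ℝ) L, u₂ (x, 0) = 0) :
    ∀ x ∈ Set.Icc (0 : ℝ) L, ∀ y ∈ Set.Icc (0 : ℝ) 1,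
      (u₂ (x, y)) ^ 2 ≤ ∫ s in (0 : ℝ)..1, (d1 u₁ (x, s)) ^ 2 := by
  intro x hx y hy
  obtain ⟨hy0, hy1⟩ := hy
  -- membership of the vertical segment in U
  have hmem : ∀ s ∈ Set.Icc (0:ℝ) 1, (x, s) ∈ U := fun s hs =>
    hUc ⟨hx, hs⟩
  -- continuity of d1 u₁ on U
  have hcont1 : ContinuousOn (d1 u₁) U := by
    have h := hu₁.continuousOn_fderiv_of_isOpen hU le_rfl
    exact (ContinuousLinearMap.apply ℝ ℝ ((1:ℝ), (0:ℝ))).continuous.comp_continuousOn h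
  have hcont2 : ContinuousOn (d2 u₂) U := by
    have h := hu₂.continuousOn_fderiv_of_isOpen hU le_rfl
    exact (ContinuousLinearMap.apply ℝ ℝ ((0:ℝ), (1:ℝ))).continuous.comp_continuousOn h
  set f : ℝ → ℝ := fun s => d1 u₁ (x, s) with hf
  have hsegcont : ContinuousOn (fun s : ℝ => (x, s)) (Set.Icc (0:ℝ) 1) :=
    (continuous_const.prodMk continuous_id).continuousOn
  have hfc : ContinuousOn f (Set.Icc (0:ℝ) 1) :=
    hcont1.comp hsegcont hmem
  have hgc : ContinuousOn (fun s => d2 u₂ (x, s)) (Set.Icc (0:ℝ) 1) :=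
    hcont2.comp hsegcont hmem
  -- FTC on [0, y]
  have hIcc : Set.uIcc (0:ℝ) y ⊆ Set.Icc (0:ℝ) 1 := by
    rw [Set.uIcc_of_le hy0]
    exact Set.Icc_subset_Icc le_rfl hy1
  have hderiv : ∀ s ∈ Set.uIcc (0:ℝ) y,
      HasDerivAt (fun t => u₂ (x, t)) (d2 u₂ (x, s)) s := by
    intro s hs
    have hsU : (x, s) ∈ U := hmem s (hIcc hs)
    have hdiff : DifferentiableAt ℝ u₂ (x, s) :=
      (hu₂.differentiableOn one_ne_zero).differentiableAt (hU.mem_nhds hsU)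
    have hseg : HasDerivAt (fun t : ℝ => (x, t)) ((0:ℝ), (1:ℝ)) s := by
      simpa using (hasDerivAt_const s x).prodMk (hasDerivAt_id s)
    exact hdiff.hasFDerivAt.comp_hasDerivAt s hseg
  have hint2 : IntervalIntegrable (fun s => d2 u₂ (x, s)) volume 0 y :=
    (hgc.mono hIcc).intervalIntegrable
  have hftc := intervalIntegral.integral_eq_sub_of_hasDerivAt hderiv hint2
  have hbc0 : u₂ (x, 0) = 0 := hbc x hx
  have hdivEq : ∀ s ∈ Set.uIcc (0:ℝ) y, d2 u₂ (x, s) = -f s := by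
    intro s hs
    have := hdiv (x, s) (hmem s (hIcc hs))
    simp only [hf]; linarith
  have hval : u₂ (x, y) = -∫ s in (0:ℝ)..y, f s := by
    rw [← intervalIntegral.integral_neg, ← intervalIntegral.integral_congr hdivEq,
      hftc, hbc0, sub_zero]
  -- integrability of f and f²
  have hfint : IntervalIntegrable f volume 0 y :=
    ((hfc.mono hIcc)).intervalIntegrable
  have hf2int : ∀ z ∈ Set.Icc (0:ℝ) 1, IntervalIntegrable (fun s => f s ^ 2) volume 0 z := by
    intro z hz
    have hsub : Set.uIcc (0:ℝ) z ⊆ Set.Icc (0:ℝ) 1 := by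
      rw [Set.uIcc_of_le hz.1]; exact Set.Icc_subset_Icc le_rfl hz.2
    exact ((hfc.mono hsub).pow 2).intervalIntegrable
  -- Cauchy–Schwarz: (∫₀^y f)² ≤ y * ∫₀^y f²
  have hCS : (∫ s in (0:ℝ)..y, f s) ^ 2 ≤ y * ∫ s in (0:ℝ)..y, f s ^ 2 := by
    rcases eq_or_lt_of_le hy0 with h0 | h0
    · simp [← h0]
    · set I := ∫ s in (0:ℝ)..y, f s with hI
      set c : ℝ := I / y with hc
      have hnonneg : 0 ≤ ∫ s in (0:ℝ)..y, (f s - c) ^ 2 :=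
        intervalIntegral.integral_nonneg hy0 (fun s _ => sq_nonneg _)
      have hexp : (∫ s in (0:ℝ)..y, (f s - c) ^ 2)
          = (∫ s in (0:ℝ)..y, f s ^ 2) - 2 * c * I + c ^ 2 * y := by
        have : ∀ s, (f s - c) ^ 2 = f s ^ 2 - 2 * c * f s + c ^ 2 := by
          intro s; ring
        simp_rw [this]
        rw [intervalIntegral.integral_add (((hf2int y ⟨hy0, hy1⟩).sub
            ((hfint.const_mul (2 * c))))) intervalIntegrable_const,
          intervalIntegral.integral_sub (hf2int y ⟨hy0, hy1⟩) (hfint.const_mul (2 * c)),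
          intervalIntegral.integral_const_mul, intervalIntegral.integral_const]
        simp only [smul_eq_mul, sub_zero]
        ring
      have hcy : c * y = I := div_mul_cancel₀ I h0.ne'
      have : 0 ≤ (∫ s in (0:ℝ)..y, f s ^ 2) - 2 * c * I + c ^ 2 * y := hexp ▸ hnonneg
      have hIc : I ^ 2 = (c * y) * I := by rw [hcy]; ring
      nlinarith [sq_nonneg c, h0]
  have hmono : (∫ s in (0:ℝ)..y, f s ^ 2) ≤ ∫ s in (0:ℝ)..1, f s ^ 2 :=
    intervalIntegral.integral_mono_interval le_rfl hy0 hy1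
      (Filter.Eventually.of_forall (fun s => sq_nonneg _))
      (hf2int 1 ⟨zero_le_one, le_rfl⟩)
  have hI2nn : 0 ≤ ∫ s in (0:ℝ)..y, f s ^ 2 :=
    intervalIntegral.integral_nonneg hy0 (fun s _ => sq_nonneg _)
  calc (u₂ (x, y)) ^ 2 = (∫ s in (0:ℝ)..y, f s) ^ 2 := by rw [hval]; ring
    _ ≤ y * ∫ s in (0:ℝ)..y, f s ^ 2 := hCS
    _ ≤ 1 * ∫ s in (0:ℝ)..y, f s ^ 2 := by
        apply mul_le_mul_of_nonneg_right hy1 hI2nn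
    _ = ∫ s in (0:ℝ)..y, f s ^ 2 := one_mul _
    _ ≤ ∫ s in (0:ℝ)..1, f s ^ 2 := hmono
end
end

section
/- Let τ>0 and γ>0. Suppose Y:[0,∞)→[0,∞) is nonnegative and locally absolutely continuous, α,β:[0,∞)→ℝ are locally integrable, and Y'(t)+α(t)Y(t) ≤ β(t) for almost every t∈(0,∞). Assume liminf_{t→∞} ∫_t^{t+τ} α(s) ds ≥ γ, limsup_{t→∞} ∫_t^{t+τ} α⁻(s) ds < ∞, and lim_{t→∞} ∫_t^{t+τ} β⁺(s) ds = 0, where α⁻=max{-α,0} and β⁺=max{β,0}. Then Y(t)→0 as t→∞. -/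
open MeasureTheory Real Filter

noncomputable section

open intervalIntegral

set_option maxHeartbeats 1000000

lemma gg_ibp (s t c : ℝ) (f g : ℝ → ℝ) (hf : Continuous f) (hg : Continuous g) :
    (c + ∫ r in s..t, f r) * Real.exp (∫ r in s..t, g r)
      = c + ∫ r in s..t, (f r + g r * (c + ∫ u in s..r, f u)) * Real.exp (∫ u in s..r, g u) := by
  set F : ℝ → ℝ := fun r => c + ∫ u in s..r, f u with hF
  set G : ℝ → ℝ := fun r => ∫ u in s..r, g u with hG
  have hFc : Continuous F := continuous_const.add (continuous_iff_continuousAt.2 fun r =>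
    ((hf.integral_hasStrictDerivAt s r).hasDerivAt).continuousAt)
  have hGc : Continuous G := continuous_iff_continuousAt.2 fun r =>
    ((hg.integral_hasStrictDerivAt s r).hasDerivAt).continuousAt
  have key : ∀ r, HasDerivAt (fun x => F x * Real.exp (G x))
      ((f r + g r * F r) * Real.exp (G r)) r := by
    intro r
    have hFd : HasDerivAt F (f r) r :=
      ((hf.integral_hasStrictDerivAt s r).hasDerivAt).const_add c
    have hGd : HasDerivAt G (g r) r := (hg.integral_hasStrictDerivAt s r).hasDerivAt
    have h2 : HasDerivAt (fun x => F x * Real.exp (G x)) (f r * rexp (G r) + F r * (rexp (G r) * g r)) r := hFd.mul hGd.exp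
    convert h2 using 1
    ring
  have hInt : IntervalIntegrable (fun r => (f r + g r * F r) * Real.exp (G r)) volume s t :=
    (((hf.add (hg.mul hFc)).mul (hGc.rexp))).intervalIntegrable s t
  have h3 := intervalIntegral.integral_eq_sub_of_hasDerivAt (fun r _ => key r) hInt
  have hFs : F s = c := by simp [hF]
  have hGs : G s = 0 := by simp [hG]
  rw [h3, hFs, hGs]
  simp; rfl

lemma gg_contbound (s t c : ℝ) (hst : s ≤ t) (f g m : ℝ → ℝ)
    (hf : Continuous f) (hg : Continuous g)
    (hm : IntervalIntegrable m volume s t) (hm0 : ∀ r, 0 ≤ m r)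
    (hbd : ∀ᵐ r ∂(volume.restrict (Set.Ioc s t)),
      f r + g r * (c + ∫ u in s..r, f u) ≤ m r) :
    c + ∫ r in s..t, f r
      ≤ c * Real.exp (-∫ r in s..t, g r)
        + Real.exp (∫ r in s..t, max (-g r) 0) * ∫ r in s..t, m r := by
  set F : ℝ → ℝ := fun r => c + ∫ u in s..r, f u with hF
  set G : ℝ → ℝ := fun r => ∫ u in s..r, g u with hG
  have hFc : Continuous F := continuous_const.add (continuous_iff_continuousAt.2 fun r =>
    ((hf.integral_hasStrictDerivAt s r).hasDerivAt).continuousAt)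
  have hGc : Continuous G := continuous_iff_continuousAt.2 fun r =>
    ((hg.integral_hasStrictDerivAt s r).hasDerivAt).continuousAt
  set D : ℝ := ∫ r in s..t, max (-g r) 0 with hD
  -- pointwise exponent bound on [s,t] : exp (G r) ≤ exp (G t) * exp D
  have hGbd : ∀ r ∈ Set.Icc s t, Real.exp (G r) ≤ Real.exp (G t) * Real.exp D := by
    intro r hr
    rw [← Real.exp_add]
    apply Real.exp_le_exp.2
    have hsplit : (∫ u in s..r, g u) + (∫ u in r..t, g u) = ∫ u in s..t, g u :=
      intervalIntegral.integral_add_adjacent_intervals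
        (hg.intervalIntegrable s r) (hg.intervalIntegrable r t)
    have h1 : -∫ u in r..t, max (-g u) 0 ≤ ∫ u in r..t, g u := by
      rw [← intervalIntegral.integral_neg]
      apply intervalIntegral.integral_mono_on hr.2
        (((hg.neg.max continuous_const).neg).intervalIntegrable r t)
        (hg.intervalIntegrable r t)
      intro x _
      simp only [Pi.neg_apply, neg_le, le_max_iff, neg_neg]
      rcases le_total (g x) 0 with h | h
      · left; linarith
      · left; linarith
    have h2 : (∫ u in r..t, max (-g u) 0) ≤ D := by
      rw [hD, ← intervalIntegral.integral_add_adjacent_intervals (f := fun u => max (-g u) 0)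
        ((hg.neg.max continuous_const).intervalIntegrable s r)
        ((hg.neg.max continuous_const).intervalIntegrable r t)]
      have : 0 ≤ ∫ u in s..r, max (-g u) 0 :=
        intervalIntegral.integral_nonneg hr.1 (fun x _ => le_max_right _ _)
      linarith
    have : G r = G t - ∫ u in r..t, g u := by rw [hG]; simp only []; linarith [hsplit]
    rw [this]
    linarith
  have hibp := gg_ibp s t c f g hf hg
  have hmono : (∫ r in s..t, (f r + g r * F r) * Real.exp (G r))
      ≤ ∫ r in s..t, m r * (Real.exp (G t) * Real.exp D) := by
    apply intervalIntegral.integral_mono_ae_restrict hst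
      (((hf.add (hg.mul hFc)).mul (hGc.rexp)).intervalIntegrable s t)
      (hm.mul_const _)
    have hIoc : (volume.restrict (Set.Ioc s t)) ≤ volume.restrict (Set.Icc s t) := by
      exact Measure.restrict_mono Set.Ioc_subset_Icc_self le_rfl
    have hres : volume.restrict (Set.Ioc s t) = volume.restrict (Set.Icc s t) :=
      Measure.restrict_congr_set MeasureTheory.Ioc_ae_eq_Icc
    rw [← hres]
    filter_upwards [hbd, MeasureTheory.ae_restrict_mem measurableSet_Ioc] with r h1 h2
    calc (f r + g r * F r) * Real.exp (G r) ≤ m r * Real.exp (G r) := by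
          apply mul_le_mul_of_nonneg_right h1 (Real.exp_nonneg _)
      _ ≤ m r * (Real.exp (G t) * Real.exp D) :=
          mul_le_mul_of_nonneg_left (hGbd r (Set.Ioc_subset_Icc_self h2)) (hm0 r)
  rw [intervalIntegral.integral_mul_const] at hmono
  -- combine
  have hE : (0:ℝ) < Real.exp (G t) := Real.exp_pos _
  have hfin : F t * Real.exp (G t) ≤ c + (∫ r in s..t, m r) * (Real.exp (G t) * Real.exp D) := by
    have hibp' : F t * Real.exp (G t)
        = c + ∫ r in s..t, (f r + g r * F r) * Real.exp (G r) := hibp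
    linarith
  have : F t ≤ c * Real.exp (-(G t)) + Real.exp D * ∫ r in s..t, m r := by
    rw [Real.exp_neg]
    rw [← mul_le_mul_iff_of_pos_right hE]
    calc F t * Real.exp (G t) ≤ c + (∫ r in s..t, m r) * (Real.exp (G t) * Real.exp D) := hfin
      _ ≤ (c * (Real.exp (G t))⁻¹ + Real.exp D * ∫ r in s..t, m r) * Real.exp (G t) := by
          rw [add_mul, mul_assoc, inv_mul_cancel₀ hE.ne', mul_one]; ring_nf; rfl
  exact this

lemma gg_posPart {f : ℝ → ℝ} {a b : ℝ} (hf : IntervalIntegrable f volume a b) :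
    IntervalIntegrable (fun r => max (f r) 0) volume a b := by
  have : (fun r => max (f r) 0) = fun r => (f r + |f r|) / 2 := by
    funext r
    rcases le_total (f r) 0 with h | h
    · rw [max_eq_right h, abs_of_nonpos h]; ring
    · rw [max_eq_left h, abs_of_nonneg h]; ring
  rw [this]
  exact (hf.add hf.abs).div_const 2

lemma gg_bound (Y Y' : ℝ → ℝ)
    (hY'int : ∀ a b : ℝ, 0 ≤ a → 0 ≤ b → IntervalIntegrable Y' volume a b)
    (hFTC : ∀ t : ℝ, 0 ≤ t → Y t = Y 0 + ∫ s in (0 : ℝ)..t, Y' s)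
    (a b : ℝ) (ha : 0 ≤ a) (hab : a ≤ b) :
    ContinuousOn Y (Set.Icc a b) ∧ ∃ C : ℝ, 0 ≤ C ∧ ∀ r ∈ Set.Icc a b, |Y r| ≤ C := by
  have hb : 0 ≤ b := ha.trans hab
  have hcont : ContinuousOn Y (Set.Icc a b) := by
    have h1 : ContinuousOn (fun r => Y 0 + ∫ u in (0:ℝ)..r, Y' u) (Set.Icc 0 b) := by
      apply continuousOn_const.add
      have := intervalIntegral.continuousOn_primitive_interval'
        (hY'int 0 b le_rfl hb) (Set.left_mem_uIcc (a := (0:ℝ)) (b := b))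
      rwa [Set.uIcc_of_le hb] at this
    have h2 : ContinuousOn Y (Set.Icc 0 b) :=
      h1.congr fun r hr => hFTC r hr.1
    exact h2.mono (Set.Icc_subset_Icc ha le_rfl)
  refine ⟨hcont, ?_⟩
  obtain ⟨C, hC⟩ := (isCompact_Icc).exists_bound_of_continuousOn hcont
  refine ⟨C, ?_, fun r hr => hC r hr⟩
  exact le_trans (norm_nonneg (Y a)) (hC a ⟨le_rfl, hab⟩)

lemma gg_approx {h : ℝ → ℝ} {s t : ℝ} (hst : s ≤ t)
    (hint : IntervalIntegrable h volume s t) {ε : ℝ} (hε : 0 < ε) :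
    ∃ g : ℝ → ℝ, Continuous g ∧ (∫ r in s..t, |h r - g r|) ≤ ε := by
  have hIoc : IntegrableOn h (Set.Ioc s t) volume :=
    (intervalIntegrable_iff_integrableOn_Ioc_of_le hst).1 hint
  have hind : Integrable ((Set.Ioc s t).indicator h) volume :=
    (integrable_indicator_iff measurableSet_Ioc).2 hIoc
  obtain ⟨g, -, hga, hgc, hgi⟩ := hind.exists_hasCompactSupport_integral_sub_le hε
  refine ⟨g, hgc, ?_⟩
  rw [intervalIntegral.integral_of_le hst]
  have h1 : Set.EqOn (fun r => |h r - g r|)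
      (fun r => ‖(Set.Ioc s t).indicator h r - g r‖) (Set.Ioc s t) := fun r hr => by
    simp only [Set.indicator_of_mem hr, Real.norm_eq_abs]
  calc (∫ r in Set.Ioc s t, |h r - g r|)
      = ∫ r in Set.Ioc s t, ‖(Set.Ioc s t).indicator h r - g r‖ :=
        setIntegral_congr_fun measurableSet_Ioc h1
    _ ≤ ∫ r, ‖(Set.Ioc s t).indicator h r - g r‖ :=
        setIntegral_le_integral ((hind.sub hgi).norm)
          (Filter.Eventually.of_forall fun r => norm_nonneg _)
    _ ≤ ε := hga

lemma gg_key (Y Y' α β : ℝ → ℝ)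
    (hY'int : ∀ a b : ℝ, 0 ≤ a → 0 ≤ b → IntervalIntegrable Y' volume a b)
    (hαint : ∀ a b : ℝ, 0 ≤ a → 0 ≤ b → IntervalIntegrable α volume a b)
    (hβint : ∀ a b : ℝ, 0 ≤ a → 0 ≤ b → IntervalIntegrable β volume a b)
    (hFTC : ∀ t : ℝ, 0 ≤ t → Y t = Y 0 + ∫ s in (0 : ℝ)..t, Y' s)
    (hineq : ∀ᵐ t : ℝ ∂volume, t ∈ Set.Ioi (0 : ℝ) → Y' t + α t * Y t ≤ β t)
    (hYs : ∀ t : ℝ, 0 ≤ t → 0 ≤ Y t)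
    (s t : ℝ) (h0s : 0 ≤ s) (hst : s ≤ t) :
    Y t ≤ Y s * Real.exp (-∫ r in s..t, α r)
      + Real.exp (∫ r in s..t, max (-α r) 0) * ∫ r in s..t, max (β r) 0 := by
  have h0t : 0 ≤ t := h0s.trans hst
  have hYr : ∀ r, s ≤ r → Y r = Y s + ∫ u in s..r, Y' u := by
    intro r hr
    have h0r : 0 ≤ r := h0s.trans hr
    have hadd := intervalIntegral.integral_add_adjacent_intervals
      (hY'int 0 s le_rfl h0s) (hY'int s r h0s h0r)
    rw [hFTC r h0r, hFTC s h0s]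
    linarith
  obtain ⟨hYc, K, hK0, hK⟩ := gg_bound Y Y' hY'int hFTC s t h0s hst
  set A : ℝ := ∫ r in s..t, α r with hA
  set Am : ℝ := ∫ r in s..t, max (-α r) 0 with hAm
  set Bp : ℝ := ∫ r in s..t, max (β r) 0 with hBp
  have hYint' := hY'int s t h0s h0t
  have hαi := hαint s t h0s h0t
  have hβi := hβint s t h0s h0t
  have hαneg : IntervalIntegrable (fun r => -(α r)) volume s t := (hαint s t h0s h0t).neg
  have main : ∀ ε₁ : ℝ, 0 < ε₁ →
      Y t ≤ Y s * Real.exp (ε₁ - A) + Real.exp (ε₁ + Am) * (Bp + ε₁ * (2 + K)) + ε₁ := by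
    intro ε₁ hε₁
    obtain ⟨g, hgc, hga⟩ := gg_approx hst hαi hε₁
    obtain ⟨Bg, hBg⟩ := (isCompact_Icc (a := s) (b := t)).exists_bound_of_continuousOn
      hgc.continuousOn
    have hBg0 : 0 ≤ Bg := le_trans (norm_nonneg _) (hBg s ⟨le_rfl, hst⟩)
    set ε₂ : ℝ := min ε₁ (ε₁ / (1 + Bg * (t - s))) with hε₂def
    have hden : 0 < 1 + Bg * (t - s) := by nlinarith [sub_nonneg.2 hst]
    have hε₂pos : 0 < ε₂ := lt_min hε₁ (div_pos hε₁ hden)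
    have hε₂le : ε₂ ≤ ε₁ := min_le_left _ _
    have hε₂Bg : Bg * (t - s) * ε₂ ≤ ε₁ := by
      have h1 : ε₂ ≤ ε₁ / (1 + Bg * (t - s)) := min_le_right _ _
      have h2 : (1 + Bg * (t - s)) * ε₂ ≤ ε₁ := by
        rw [← le_div_iff₀' hden]; exact h1
      nlinarith [hε₂pos.le]
    obtain ⟨f, hfc, hfa⟩ := gg_approx hst hYint' hε₂pos
    set Yg : ℝ → ℝ := fun r => Y s + ∫ u in s..r, f u with hYg
    have hYgY : ∀ r ∈ Set.Icc s t, |Yg r - Y r| ≤ ε₂ := by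
      intro r hr
      have hYr' := hYr r hr.1
      have hsub : Yg r - Y r = ∫ u in s..r, (f u - Y' u) := by
        rw [hYr', hYg]
        simp only []
        rw [intervalIntegral.integral_sub (hfc.intervalIntegrable s r)
          (hY'int s r h0s (h0s.trans hr.1))]
        ring
      rw [hsub]
      calc |∫ u in s..r, (f u - Y' u)| ≤ ∫ u in s..r, |f u - Y' u| :=
            intervalIntegral.abs_integral_le_integral_abs hr.1
        _ ≤ ∫ u in s..t, |f u - Y' u| := by
            rw [← intervalIntegral.integral_add_adjacent_intervals
              ((hfc.intervalIntegrable s r).sub (hY'int s r h0s (h0s.trans hr.1))).abs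
              ((hfc.intervalIntegrable r t).sub (hY'int r t (h0s.trans hr.1) h0t)).abs]
            have : 0 ≤ ∫ u in r..t, |f u - Y' u| :=
              intervalIntegral.integral_nonneg hr.2 fun x _ => abs_nonneg _
            linarith
        _ ≤ ε₂ := by
            rw [show (∫ u in s..t, |f u - Y' u|) = ∫ u in s..t, |Y' u - f u| from
              intervalIntegral.integral_congr fun u _ => abs_sub_comm _ _]
            exact hfa
    set m : ℝ → ℝ := fun r =>
      max (β r) 0 + (|Y' r - f r| + (|α r - g r| * K + Bg * ε₂)) with hm
    have hm0 : ∀ r, 0 ≤ m r := by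
      intro r
      have := abs_nonneg (Y' r - f r)
      have := abs_nonneg (α r - g r)
      have := le_max_right (β r) 0
      positivity
    have hmint : IntervalIntegrable m volume s t := by
      apply (gg_posPart hβi).add
      apply IntervalIntegrable.add ((hYint'.sub (hfc.intervalIntegrable s t)).abs)
      exact (((hαi.sub (hgc.intervalIntegrable s t)).abs.mul_const K).add
        (intervalIntegrable_const))
    have hae : ∀ᵐ r ∂(volume.restrict (Set.Ioc s t)),
        f r + g r * (Y s + ∫ u in s..r, f u) ≤ m r := by
      filter_upwards [ae_restrict_of_ae hineq, ae_restrict_mem measurableSet_Ioc] with r hr hrmem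
      have hr0 : r ∈ Set.Ioi (0:ℝ) := lt_of_le_of_lt h0s hrmem.1
      specialize hr hr0
      have hrIcc : r ∈ Set.Icc s t := Set.Ioc_subset_Icc_self hrmem
      have e1 : |Yg r - Y r| ≤ ε₂ := hYgY r hrIcc
      have e2 : |Y r| ≤ K := (Real.norm_eq_abs _ ▸ hK r hrIcc)
      have e3 : |g r| ≤ Bg := (Real.norm_eq_abs _ ▸ hBg r hrIcc)
      have t1 : f r - Y' r ≤ |Y' r - f r| := by
        rw [abs_sub_comm]; exact le_abs_self _
      have t2 : g r * Yg r - g r * Y r ≤ Bg * ε₂ := by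
        calc g r * Yg r - g r * Y r = g r * (Yg r - Y r) := by ring
          _ ≤ |g r * (Yg r - Y r)| := le_abs_self _
          _ = |g r| * |Yg r - Y r| := abs_mul _ _
          _ ≤ Bg * ε₂ := mul_le_mul e3 e1 (abs_nonneg _) hBg0
      have t3 : g r * Y r - α r * Y r ≤ |α r - g r| * K := by
        calc g r * Y r - α r * Y r = (g r - α r) * Y r := by ring
          _ ≤ |(g r - α r) * Y r| := le_abs_self _
          _ = |g r - α r| * |Y r| := abs_mul _ _
          _ ≤ |α r - g r| * K := by
              rw [abs_sub_comm]
              exact mul_le_mul_of_nonneg_left e2 (abs_nonneg _)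
      have t4 : β r ≤ max (β r) 0 := le_max_left _ _
      have hYgr : Yg r = Y s + ∫ u in s..r, f u := rfl
      rw [hm]
      simp only [← hYgr]
      linarith
    have hB := gg_contbound s t (Y s) hst f g m hfc hgc hmint hm0 hae
    -- now assemble
    have hYgt : Yg t = Y s + ∫ r in s..t, f r := rfl
    have hYt : Y t ≤ Yg t + ε₂ := by
      have := hYgY t ⟨hst, le_rfl⟩
      have habs := abs_sub_abs_le_abs_sub (Yg t) (Y t)
      have := neg_abs_le (Yg t - Y t)
      linarith [abs_nonneg (Yg t - Y t), neg_le_of_abs_le (hYgY t ⟨hst, le_rfl⟩)]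
    -- exp(-∫g) ≤ exp(ε₁ - A)
    have hgA : |(∫ r in s..t, g r) - A| ≤ ε₁ := by
      rw [hA, ← intervalIntegral.integral_sub (hgc.intervalIntegrable s t) hαi]
      calc |∫ r in s..t, (g r - α r)| ≤ ∫ r in s..t, |g r - α r| :=
            intervalIntegral.abs_integral_le_integral_abs hst
        _ = ∫ r in s..t, |α r - g r| :=
            intervalIntegral.integral_congr fun u _ => abs_sub_comm _ _
        _ ≤ ε₁ := hga
    have hexp1 : Real.exp (-∫ r in s..t, g r) ≤ Real.exp (ε₁ - A) := by
      apply Real.exp_le_exp.2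
      have := abs_le.1 hgA
      linarith [this.1]
    -- ∫ g⁻ ≤ Am + ε₁
    have hgm : (∫ r in s..t, max (-g r) 0) ≤ Am + ε₁ := by
      have hpt : ∀ u ∈ Set.Icc s t, max (-g u) 0 ≤ max (-α u) 0 + |α u - g u| := by
        intro u _
        apply max_le
        · have : -g u = -α u + (α u - g u) := by ring
          rw [this]
          have h1 : -α u ≤ max (-α u) 0 := le_max_left _ _
          have h2 : α u - g u ≤ |α u - g u| := le_abs_self _
          linarith
        · have := le_max_right (-α u) (0:ℝ)
          have := abs_nonneg (α u - g u)
          linarith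
      calc (∫ r in s..t, max (-g r) 0)
          ≤ ∫ r in s..t, (max (-α r) 0 + |α r - g r|) := by
            apply intervalIntegral.integral_mono_on hst
              ((hgc.neg.max continuous_const).intervalIntegrable s t)
              ((gg_posPart hαneg).add (hαi.sub (hgc.intervalIntegrable s t)).abs)
              hpt
        _ = Am + ∫ r in s..t, |α r - g r| := by
            rw [intervalIntegral.integral_add (gg_posPart hαneg)
              (hαi.sub (hgc.intervalIntegrable s t)).abs]
        _ ≤ Am + ε₁ := by linarith
    have hexp2 : Real.exp (∫ r in s..t, max (-g r) 0) ≤ Real.exp (ε₁ + Am) :=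
      Real.exp_le_exp.2 (by linarith)
    -- ∫ m ≤ Bp + ε₁ * (2 + K)
    have hmle : (∫ r in s..t, m r) ≤ Bp + ε₁ * (2 + K) := by
      have e1 : (∫ r in s..t, |Y' r - f r|) ≤ ε₂ := hfa
      have e2 : (∫ r in s..t, |α r - g r| * K) ≤ ε₁ * K := by
        rw [intervalIntegral.integral_mul_const]
        exact mul_le_mul_of_nonneg_right hga hK0
      have e3 : (∫ r in s..t, (Bg * ε₂ : ℝ)) ≤ ε₁ := by
        rw [intervalIntegral.integral_const, smul_eq_mul]
        calc (t - s) * (Bg * ε₂) = Bg * (t - s) * ε₂ := by ring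
          _ ≤ ε₁ := hε₂Bg
      have hsplit : (∫ r in s..t, m r) = Bp + ((∫ r in s..t, |Y' r - f r|)
          + ((∫ r in s..t, |α r - g r| * K) + ∫ r in s..t, (Bg * ε₂ : ℝ))) := by
        rw [hm, hBp]
        rw [intervalIntegral.integral_add (gg_posPart hβi)
          (((hYint'.sub (hfc.intervalIntegrable s t)).abs).add
            (((hαi.sub (hgc.intervalIntegrable s t)).abs.mul_const K).add
              intervalIntegrable_const)),
          intervalIntegral.integral_add ((hYint'.sub (hfc.intervalIntegrable s t)).abs)
            (((hαi.sub (hgc.intervalIntegrable s t)).abs.mul_const K).add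
              intervalIntegrable_const),
          intervalIntegral.integral_add ((hαi.sub (hgc.intervalIntegrable s t)).abs.mul_const K)
            intervalIntegrable_const]
      rw [hsplit]
      have : ε₂ ≤ ε₁ := hε₂le
      linarith
    have hm0' : 0 ≤ ∫ r in s..t, m r :=
      intervalIntegral.integral_nonneg hst fun u _ => hm0 u
    have hYs0 : 0 ≤ Y s := hYs s h0s
    calc Y t ≤ Yg t + ε₂ := hYt
      _ ≤ (Y s * Real.exp (-∫ r in s..t, g r)
            + Real.exp (∫ r in s..t, max (-g r) 0) * ∫ r in s..t, m r) + ε₂ := by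
          rw [hYgt]; linarith [hB]
      _ ≤ Y s * Real.exp (ε₁ - A) + Real.exp (ε₁ + Am) * (Bp + ε₁ * (2 + K)) + ε₁ := by
          have b1 : Y s * Real.exp (-∫ r in s..t, g r) ≤ Y s * Real.exp (ε₁ - A) :=
            mul_le_mul_of_nonneg_left hexp1 hYs0
          have b2 : Real.exp (∫ r in s..t, max (-g r) 0) * ∫ r in s..t, m r
              ≤ Real.exp (ε₁ + Am) * (Bp + ε₁ * (2 + K)) :=
            mul_le_mul hexp2 hmle hm0' (Real.exp_nonneg _)
          linarith
  -- pass to the limit ε₁ → 0⁺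
  set R : ℝ → ℝ := fun ε => Y s * Real.exp (ε - A) + Real.exp (ε + Am) * (Bp + ε * (2 + K)) + ε
    with hR
  have hRcont : ContinuousAt R 0 := by
    apply Continuous.continuousAt
    fun_prop
  have hlim : Tendsto R (nhdsWithin 0 (Set.Ioi 0)) (nhds (R 0)) :=
    hRcont.tendsto.mono_left nhdsWithin_le_nhds
  have hev : ∀ᶠ ε in nhdsWithin 0 (Set.Ioi 0), Y t ≤ R ε := by
    filter_upwards [self_mem_nhdsWithin] with ε hε
    exact main ε hε
  have hfin : Y t ≤ R 0 := ge_of_tendsto hlim hev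
  have hR0 : R 0 = Y s * Real.exp (-A) + Real.exp Am * Bp := by
    rw [hR]; simp
  rw [hR0] at hfin
  exact hfin


/-- the generalized Gronwall lemma of Jones–Titi.  Here local absolute
continuity of `Y` on `[0,∞)` is expressed through the fundamental theorem of calculus:
`Y t = Y 0 + ∫₀ᵗ Y'`, with `Y'` locally integrable. -/
theorem generalized_gronwall (τ γ : ℝ) (hτ : 0 < τ) (hγ : 0 < γ)
    (Y Y' α β : ℝ → ℝ)
    (hYnn : ∀ t : ℝ, 0 ≤ t → 0 ≤ Y t)
    (hY'int : ∀ a b : ℝ, 0 ≤ a → 0 ≤ b → IntervalIntegrable Y' volume a b)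
    (hαint : ∀ a b : ℝ, 0 ≤ a → 0 ≤ b → IntervalIntegrable α volume a b)
    (hβint : ∀ a b : ℝ, 0 ≤ a → 0 ≤ b → IntervalIntegrable β volume a b)
    (hFTC : ∀ t : ℝ, 0 ≤ t → Y t = Y 0 + ∫ s in (0 : ℝ)..t, Y' s)
    (hineq : ∀ᵐ t : ℝ ∂volume, t ∈ Set.Ioi (0 : ℝ) → Y' t + α t * Y t ≤ β t)
    (hliminf : ∀ ε : ℝ, 0 < ε → ∀ᶠ t in atTop, γ - ε ≤ ∫ s in t..(t + τ), α s)
    (hlimsup : ∃ M : ℝ, ∀ᶠ t in atTop, (∫ s in t..(t + τ), max (-α s) 0) ≤ M)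
    (hβlim : Tendsto (fun t : ℝ => ∫ s in t..(t + τ), max (β s) 0) atTop (nhds 0)) :
    Tendsto Y atTop (nhds 0) := by
  obtain ⟨M₀, hM⟩ := hlimsup
  set θ : ℝ := Real.exp (-(γ/2)) with hθdef
  have hθ0 : 0 < θ := Real.exp_pos _
  have hθ1 : θ < 1 := Real.exp_lt_one_iff.2 (by linarith)
  set M : ℝ := max M₀ 0 with hMdef
  have hev : ∀ᶠ t in atTop, (γ - γ/2 ≤ ∫ s in t..(t + τ), α s)
      ∧ (∫ s in t..(t + τ), max (-α s) 0) ≤ M₀ := (hliminf (γ/2) (half_pos hγ)).and hM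
  obtain ⟨T₀', hT₀'⟩ := eventually_atTop.1 hev
  set T₀ : ℝ := max T₀' 0 with hT₀def
  have hT₀0 : (0:ℝ) ≤ T₀ := le_max_right _ _
  have step : ∀ t, T₀ ≤ t →
      Y (t + τ) ≤ θ * Y t + Real.exp M * ∫ s in t..(t + τ), max (β s) 0 := by
    intro t ht
    have h0t : 0 ≤ t := le_trans hT₀0 ht
    have htt : t ≤ t + τ := by linarith
    have hk := gg_key Y Y' α β hY'int hαint hβint hFTC hineq hYnn t (t + τ) h0t htt
    obtain ⟨h1, h2⟩ := hT₀' t (le_trans (le_max_left _ _) ht)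
    have e1 : Real.exp (-∫ s in t..(t + τ), α s) ≤ θ := by
      rw [hθdef]
      apply Real.exp_le_exp.2
      linarith
    have e2 : Real.exp (∫ s in t..(t + τ), max (-α s) 0) ≤ Real.exp M :=
      Real.exp_le_exp.2 (le_trans h2 (le_max_left _ _))
    have e3 : (0:ℝ) ≤ ∫ s in t..(t + τ), max (β s) 0 :=
      intervalIntegral.integral_nonneg htt fun x _ => le_max_right _ _
    have hY0 := hYnn t h0t
    have b1 : Y t * Real.exp (-∫ s in t..(t + τ), α s) ≤ θ * Y t := by
      rw [mul_comm]
      exact mul_le_mul_of_nonneg_right e1 hY0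
    have b2 : Real.exp (∫ s in t..(t + τ), max (-α s) 0) * ∫ s in t..(t + τ), max (β s) 0
        ≤ Real.exp M * ∫ s in t..(t + τ), max (β s) 0 :=
      mul_le_mul_of_nonneg_right e2 e3
    linarith
  rw [Metric.tendsto_atTop]
  intro δ hδ
  have h1θ : 0 < 1 - θ := by linarith
  set δ₁ : ℝ := (1 - θ) * δ / 4 with hδ₁def
  have hδ₁pos : 0 < δ₁ := by positivity
  have hsm : ∀ᶠ t in atTop, (∫ s in t..(t + τ), max (β s) 0) < δ₁ / Real.exp M :=
    hβlim.eventually_lt_const (by positivity)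
  obtain ⟨T₁', hT₁'⟩ := eventually_atTop.1 hsm
  set T₁ : ℝ := max T₁' T₀ with hT₁def
  have hT₁0 : (0:ℝ) ≤ T₁ := le_trans hT₀0 (le_max_right _ _)
  have step2 : ∀ t, T₁ ≤ t → Y (t + τ) ≤ θ * Y t + δ₁ := by
    intro t ht
    have h := step t (le_trans (le_max_right _ _) ht)
    have h2 := hT₁' t (le_trans (le_max_left _ _) ht)
    have h3 : Real.exp M * ∫ s in t..(t + τ), max (β s) 0 ≤ δ₁ := by
      rw [mul_comm, ← le_div_iff₀ (Real.exp_pos M)]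
      exact h2.le
    linarith
  obtain ⟨-, C, hC0, hC⟩ := gg_bound Y Y' hY'int hFTC T₁ (T₁ + τ) hT₁0 (by linarith)
  have ind : ∀ n : ℕ, ∀ t, T₁ ≤ t → Y (t + n * τ) ≤ θ ^ n * Y t + δ / 2 := by
    intro n
    induction n with
    | zero => intro t ht; simp; linarith
    | succ k ih =>
      intro t ht
      have hkτ : (0:ℝ) ≤ (k:ℝ) * τ := mul_nonneg (Nat.cast_nonneg k) hτ.le
      have h1 : T₁ ≤ t + k * τ := by linarith
      have h2 := step2 (t + k * τ) h1
      have h3 := ih t ht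
      have heq : t + ((k:ℕ)+1 : ℕ) * τ = (t + (k:ℝ) * τ) + τ := by push_cast; ring
      rw [heq]
      have hYtk := hYnn t (le_trans hT₁0 ht)
      have hθpow : (0:ℝ) ≤ θ ^ k := pow_nonneg hθ0.le k
      calc Y ((t + (k:ℝ) * τ) + τ) ≤ θ * Y (t + (k:ℝ) * τ) + δ₁ := h2
        _ ≤ θ * (θ ^ k * Y t + δ / 2) + δ₁ := by
            nlinarith [mul_le_mul_of_nonneg_left h3 hθ0.le]
        _ ≤ θ ^ (k+1) * Y t + δ / 2 := by
            rw [pow_succ]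
            nlinarith
  have hpow : Tendsto (fun n : ℕ => θ ^ n * C) atTop (nhds 0) := by
    have h := tendsto_pow_atTop_nhds_zero_of_lt_one hθ0.le hθ1
    simpa using h.mul_const C
  obtain ⟨N, hN⟩ := eventually_atTop.1 (hpow.eventually_lt_const (show (0:ℝ) < δ / 2 by linarith))
  have hNδ : θ ^ N * C < δ / 2 := hN N le_rfl
  refine ⟨T₁ + N * τ, fun u hu => ?_⟩
  have hNτ : (0:ℝ) ≤ (N:ℝ) * τ := mul_nonneg (Nat.cast_nonneg N) hτ.le
  have huT₁ : T₁ ≤ u := by linarith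
  set n : ℕ := ⌊(u - T₁) / τ⌋₊ with hn
  have hx0 : 0 ≤ (u - T₁) / τ := div_nonneg (by linarith) hτ.le
  have hnN : N ≤ n := Nat.le_floor (by rw [le_div_iff₀ hτ]; linarith)
  have h1 : (n:ℝ) * τ ≤ u - T₁ := (le_div_iff₀ hτ).1 (Nat.floor_le hx0)
  have h2 : u - T₁ < ((n:ℝ) + 1) * τ := by
    have h := Nat.lt_floor_add_one ((u - T₁) / τ)
    rw [div_lt_iff₀ hτ] at h
    exact_mod_cast h
  set tb : ℝ := u - n * τ with htbdef
  have htb1 : T₁ ≤ tb := by rw [htbdef]; linarith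
  have htb2 : tb ≤ T₁ + τ := by rw [htbdef]; linarith
  have hind := ind n tb htb1
  have hub : Y tb ≤ C := le_trans (le_abs_self _) (hC tb ⟨htb1, htb2⟩)
  have heq : tb + (n:ℝ) * τ = u := by rw [htbdef]; ring
  rw [Real.dist_eq, sub_zero, abs_of_nonneg (hYnn u (le_trans hT₁0 huT₁))]
  have hθn : θ ^ n ≤ θ ^ N := pow_le_pow_of_le_one hθ0.le hθ1.le hnN
  have hθnn : (0:ℝ) ≤ θ ^ n := pow_nonneg hθ0.le n
  calc Y u = Y (tb + (n:ℝ) * τ) := by rw [heq]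
    _ ≤ θ ^ n * Y tb + δ / 2 := hind
    _ ≤ θ ^ n * C + δ / 2 := by nlinarith
    _ ≤ θ ^ N * C + δ / 2 := by nlinarith
    _ < δ := by linarith
end
end

section
/- Let L>0, Ω=(0,L)×(-1,1), and κ>0, λ>0. Let w=(w₁,w₂) be a smooth Ω-periodic, divergence-free, symmetric vector field and let ξ be a smooth Ω-periodic scalar function satisfying the Poincaré inequality ‖ξ‖² ≤ λ⁻¹‖∇ξ‖². Then |∫_Ω ξ(x) w₂(x) dx| ≤ (κ/20)‖∇ξ‖² + (5/(κλ))‖∇w₁‖². -/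
open MeasureTheory Real Filter

noncomputable section

section Aux

lemma myContD1 {f : ℝ × ℝ → ℝ} (hf : ContDiff ℝ (⊤:ℕ∞) f) : Continuous (d1 f) :=
  (hf.continuous_fderiv (by simp)).clm_apply continuous_const

lemma myContD2 {f : ℝ × ℝ → ℝ} (hf : ContDiff ℝ (⊤:ℕ∞) f) : Continuous (d2 f) :=
  (hf.continuous_fderiv (by simp)).clm_apply continuous_const

lemma myHasDerivAtSnd {f : ℝ × ℝ → ℝ} (hf : ContDiff ℝ (⊤:ℕ∞) f) (x t : ℝ) :
    HasDerivAt (fun s => f (x, s)) (d2 f (x, t)) t := by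
  have h1 : HasFDerivAt f (fderiv ℝ f (x, t)) (x, t) :=
    (hf.differentiable (by simp) (x, t)).hasFDerivAt
  have h2 : HasDerivAt (fun s : ℝ => ((x, s) : ℝ × ℝ)) (0, 1) t := by
    simpa using ((hasDerivAt_const t x).prodMk (hasDerivAt_id t))
  simpa [d2, Function.comp_def] using (h1.comp_hasDerivAt t h2)

lemma myIntegrableOnOmg {L : ℝ} {g : ℝ × ℝ → ℝ} (hg : Continuous g) :
    IntegrableOn g (Omg L) := by
  have hsub : Omg L ⊆ Set.Icc 0 L ×ˢ Set.Icc (-1 : ℝ) 1 :=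
    Set.prod_mono Set.Ioo_subset_Icc_self Set.Ioo_subset_Icc_self
  exact (hg.continuousOn.integrableOn_compact (isCompact_Icc.prod isCompact_Icc)).mono_set hsub

lemma myCsAb (g : ℝ → ℝ) (hg : Continuous g) {a b : ℝ} (hab : a ≤ b) :
    (∫ t in a..b, g t) ^ 2 ≤ (b - a) * ∫ t in a..b, (g t) ^ 2 := by
  rcases eq_or_lt_of_le hab with h | h
  · simp [← h]
  set d := b - a with hd
  have hd0 : 0 < d := by simp [hd]; linarith
  set A := ∫ t in a..b, g t with hA
  have e1 : A ^ 2 = ∫ t in a..b, A * g t := by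
    rw [intervalIntegral.integral_const_mul]; ring
  have e2 : (∫ t in a..b, A * g t) ≤ ∫ t in a..b, (d / 2 * (g t) ^ 2 + A ^ 2 / (2 * d)) := by
    apply intervalIntegral.integral_mono_on hab
    · exact (continuous_const.mul hg).intervalIntegrable a b
    · exact ((continuous_const.mul (hg.pow 2)).add continuous_const).intervalIntegrable a b
    · intro t _
      rw [← sub_nonneg]
      have he : d / 2 * (g t) ^ 2 + A ^ 2 / (2 * d) - A * g t = (d * g t - A) ^ 2 / (2 * d) := by
        field_simp
        ring
      rw [he]
      positivity
  have e3 : (∫ t in a..b, (d / 2 * (g t) ^ 2 + A ^ 2 / (2 * d)))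
      = d / 2 * (∫ t in a..b, (g t) ^ 2) + A ^ 2 / 2 := by
    rw [intervalIntegral.integral_add (f := fun t => d / 2 * (g t) ^ 2) ((continuous_const.mul (hg.pow 2)).intervalIntegrable a b)
      (intervalIntegrable_const), intervalIntegral.integral_const_mul,
      intervalIntegral.integral_const]
    rw [smul_eq_mul, ← hd]
    field_simp
  nlinarith [e1, e2, e3]

lemma myAbsInt : (∫ y in Set.Ioo (-1:ℝ) 1, |y|) = 1 := by
  rw [← MeasureTheory.integral_Ioc_eq_integral_Ioo,
    ← intervalIntegral.integral_of_le (by norm_num : (-1:ℝ) ≤ 1)]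
  have h1 : (∫ y in (-1:ℝ)..0, |y|) = 1/2 := by
    have hc : ∀ y ∈ Set.uIcc (-1:ℝ) 0, |y| = -y := by
      intro y hy
      rw [Set.uIcc_of_le (by norm_num : (-1:ℝ) ≤ 0)] at hy
      exact abs_of_nonpos hy.2
    rw [intervalIntegral.integral_congr hc, intervalIntegral.integral_neg, integral_id]
    norm_num
  have h2 : (∫ y in (0:ℝ)..1, |y|) = 1/2 := by
    have hc : ∀ y ∈ Set.uIcc (0:ℝ) 1, |y| = y := by
      intro y hy
      rw [Set.uIcc_of_le (by norm_num : (0:ℝ) ≤ 1)] at hy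
      exact abs_of_nonneg hy.1
    rw [intervalIntegral.integral_congr hc]
    simp
  rw [← intervalIntegral.integral_add_adjacent_intervals
    ((continuous_abs).intervalIntegrable (-1) 0) ((continuous_abs).intervalIntegrable 0 1),
    h1, h2]
  norm_num

/-- Pointwise bound on `w₂` from the fundamental theorem of calculus and Cauchy–Schwarz. -/
lemma myW2Bound {w₁ w₂ : ℝ × ℝ → ℝ}
    (hw₁ : ContDiff ℝ (⊤:ℕ∞) w₁) (hw₂ : ContDiff ℝ (⊤:ℕ∞) w₂)
    (hdiv : DivFree w₁ w₂) (hodd : ∀ x y : ℝ, w₂ (x, -y) = -w₂ (x, y))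
    {x y : ℝ} (hy : y ∈ Set.Ioo (-1:ℝ) 1) :
    (w₂ (x, y)) ^ 2 ≤ |y| * ∫ t in Set.Ioo (-1:ℝ) 1, (d1 w₁ (x, t)) ^ 2 := by
  have hzero : w₂ (x, 0) = 0 := by
    have h := hodd x 0
    simp only [neg_zero] at h
    linarith
  set g : ℝ → ℝ := fun t => d1 w₁ (x, t) with hg
  have hgc : Continuous g := (myContD1 hw₁).comp (continuous_const.prodMk continuous_id)
  have hd2c : Continuous (fun t => d2 w₂ (x, t)) :=
    (myContD2 hw₂).comp (continuous_const.prodMk continuous_id)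
  have hftc : (∫ t in (0:ℝ)..y, d2 w₂ (x, t)) = w₂ (x, y) - w₂ (x, 0) :=
    intervalIntegral.integral_eq_sub_of_hasDerivAt (fun t _ => myHasDerivAtSnd hw₂ x t)
      (hd2c.intervalIntegrable _ _)
  have hdg : ∀ t : ℝ, d2 w₂ (x, t) = -g t := by
    intro t
    have h := hdiv (x, t)
    simp only [hg]
    linarith
  have heq : w₂ (x, y) = -∫ t in (0:ℝ)..y, g t := by
    rw [hzero, sub_zero] at hftc
    rw [← hftc, ← intervalIntegral.integral_neg]
    exact intervalIntegral.integral_congr (fun t _ => hdg t)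
  have hsq : (w₂ (x, y)) ^ 2 = (∫ t in (0:ℝ)..y, g t) ^ 2 := by rw [heq]; ring
  have hIoo : IntegrableOn (fun t => (g t) ^ 2) (Set.Ioo (-1:ℝ) 1) := by
    exact ((hgc.pow 2).integrableOn_Icc).mono_set Set.Ioo_subset_Icc_self
  have hnn : 0 ≤ᵐ[volume.restrict (Set.Ioo (-1:ℝ) 1)] fun t => (g t) ^ 2 :=
    Filter.Eventually.of_forall (fun t => sq_nonneg _)
  rcases le_or_gt 0 y with hy0 | hy0
  · have h1 := myCsAb g hgc hy0
    have h2 : (∫ t in (0:ℝ)..y, (g t) ^ 2) ≤ ∫ t in Set.Ioo (-1:ℝ) 1, (g t) ^ 2 := by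
      rw [intervalIntegral.integral_of_le hy0, MeasureTheory.integral_Ioc_eq_integral_Ioo]
      exact MeasureTheory.setIntegral_mono_set hIoo hnn
        (HasSubset.Subset.eventuallyLE (by
          intro t ht
          exact ⟨by linarith [ht.1, hy.1], by linarith [ht.2, hy.2]⟩))
    rw [hsq, abs_of_nonneg hy0]
    calc (∫ t in (0:ℝ)..y, g t) ^ 2 ≤ (y - 0) * ∫ t in (0:ℝ)..y, (g t) ^ 2 := h1
      _ ≤ y * ∫ t in Set.Ioo (-1:ℝ) 1, (g t) ^ 2 := by
          rw [sub_zero]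
          exact mul_le_mul_of_nonneg_left h2 hy0
  · have hy0' : y ≤ 0 := le_of_lt hy0
    have h1 := myCsAb g hgc hy0'
    have h2 : (∫ t in y..(0:ℝ), (g t) ^ 2) ≤ ∫ t in Set.Ioo (-1:ℝ) 1, (g t) ^ 2 := by
      rw [intervalIntegral.integral_of_le hy0', MeasureTheory.integral_Ioc_eq_integral_Ioo]
      exact MeasureTheory.setIntegral_mono_set hIoo hnn
        (HasSubset.Subset.eventuallyLE (by
          intro t ht
          exact ⟨by linarith [ht.1, hy.1], by linarith [ht.2]⟩))
    have hflip : (∫ t in (0:ℝ)..y, g t) ^ 2 = (∫ t in y..(0:ℝ), g t) ^ 2 := by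
      rw [intervalIntegral.integral_symm]
      ring
    rw [hsq, hflip, abs_of_neg hy0]
    calc (∫ t in y..(0:ℝ), g t) ^ 2 ≤ (0 - y) * ∫ t in y..(0:ℝ), (g t) ^ 2 := h1
      _ ≤ -y * ∫ t in Set.Ioo (-1:ℝ) 1, (g t) ^ 2 := by
          rw [zero_sub]
          exact mul_le_mul_of_nonneg_left h2 (by linarith)

end Aux


/-- estimate (3.8) of the paper:
`|∫_Ω ξ w₂| ≤ (κ/20)‖∇ξ‖² + (5/(κλ))‖∇w₁‖²`. -/
theorem buoyancy_estimate (L : ℝ) (hL : 0 < L) (κ lam : ℝ) (hκ : 0 < κ) (hlam : 0 < lam)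
    (w₁ w₂ ξ : ℝ × ℝ → ℝ)
    (hw₁ : ContDiff ℝ (⊤ : ℕ∞) w₁) (hw₂ : ContDiff ℝ (⊤ : ℕ∞) w₂) (hξ : ContDiff ℝ (⊤ : ℕ∞) ξ)
    (hpw₁ : OmgPeriodic L w₁) (hpw₂ : OmgPeriodic L w₂) (hpξ : OmgPeriodic L ξ)
    (hdiv : DivFree w₁ w₂) (hsym : Symm w₁ w₂)
    (hpoincare : nrmSq L ξ ≤ lam⁻¹ * gradNrmSq L ξ) :
    |∫ p in Omg L, ξ p * w₂ p| ≤
      κ / 20 * gradNrmSq L ξ + 5 / (κ * lam) * gradNrmSq L w₁ := by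
  obtain ⟨_, hodd⟩ := hsym
  set c : ℝ := κ * lam / 10 with hc
  have hc0 : 0 < c := by positivity
  have hcw₂ : Continuous w₂ := hw₂.continuous
  have hcξ : Continuous ξ := hξ.continuous
  have hcd1w₁ : Continuous (d1 w₁) := myContD1 hw₁
  have hcd2w₁ : Continuous (d2 w₁) := myContD2 hw₁
  have hIprod : IntegrableOn (fun p => ξ p * w₂ p) (Omg L) := myIntegrableOnOmg (hcξ.mul hcw₂)
  have hIabs : IntegrableOn (fun p => |ξ p * w₂ p|) (Omg L) := hIprod.abs
  have hIξ2 : IntegrableOn (fun p => (ξ p)^2) (Omg L) := myIntegrableOnOmg (hcξ.pow 2)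
  have hIw2 : IntegrableOn (fun p => (w₂ p)^2) (Omg L) := myIntegrableOnOmg (hcw₂.pow 2)
  have hId1 : IntegrableOn (fun p => (d1 w₁ p)^2) (Omg L) := myIntegrableOnOmg (hcd1w₁.pow 2)
  have hIgrad : IntegrableOn (fun p => (d1 w₁ p)^2 + (d2 w₁ p)^2) (Omg L) :=
    myIntegrableOnOmg ((hcd1w₁.pow 2).add (hcd2w₁.pow 2))
  have hmeasOmg : MeasurableSet (Omg L) := measurableSet_Ioo.prod measurableSet_Ioo
  set F : ℝ → ℝ := fun x => ∫ t in Set.Ioo (-1:ℝ) 1, (d1 w₁ (x, t))^2 with hF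
  have fub1 : (∫ p in Omg L, (w₂ p)^2)
      = ∫ x in Set.Ioo 0 L, ∫ y in Set.Ioo (-1:ℝ) 1, (w₂ (x, y))^2 :=
    MeasureTheory.setIntegral_prod _ hIw2
  have fub2 : (∫ p in Omg L, (d1 w₁ p)^2) = ∫ x in Set.Ioo 0 L, F x :=
    MeasureTheory.setIntegral_prod _ hId1
  have hIw2' : Integrable (fun x => ∫ y in Set.Ioo (-1:ℝ) 1, (w₂ (x, y))^2)
      (volume.restrict (Set.Ioo 0 L)) := by
    have h : Integrable (fun p : ℝ × ℝ => (w₂ p)^2)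
        ((volume.restrict (Set.Ioo 0 L)).prod (volume.restrict (Set.Ioo (-1:ℝ) 1))) := by
      rw [Measure.prod_restrict]; exact hIw2
    exact h.integral_prod_left
  have hIF : Integrable F (volume.restrict (Set.Ioo 0 L)) := by
    have h : Integrable (fun p : ℝ × ℝ => (d1 w₁ p)^2)
        ((volume.restrict (Set.Ioo 0 L)).prod (volume.restrict (Set.Ioo (-1:ℝ) 1))) := by
      rw [Measure.prod_restrict]; exact hId1
    exact h.integral_prod_left
  have hinner : ∀ x ∈ Set.Ioo (0:ℝ) L,
      (∫ y in Set.Ioo (-1:ℝ) 1, (w₂ (x, y))^2) ≤ F x := by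
    intro x hx
    have hb : ∀ y ∈ Set.Ioo (-1:ℝ) 1, (w₂ (x, y))^2 ≤ |y| * F x :=
      fun y hy => myW2Bound hw₁ hw₂ hdiv hodd hy
    have hI1 : IntegrableOn (fun y => (w₂ (x, y))^2) (Set.Ioo (-1:ℝ) 1) :=
      (((hcw₂.comp (continuous_const.prodMk continuous_id)).pow 2).integrableOn_Icc).mono_set
        Set.Ioo_subset_Icc_self
    have hI2 : IntegrableOn (fun y : ℝ => |y| * F x) (Set.Ioo (-1:ℝ) 1) :=
      ((continuous_abs.mul continuous_const).integrableOn_Icc).mono_set Set.Ioo_subset_Icc_self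
    calc (∫ y in Set.Ioo (-1:ℝ) 1, (w₂ (x, y))^2)
        ≤ ∫ y in Set.Ioo (-1:ℝ) 1, |y| * F x :=
          MeasureTheory.setIntegral_mono_on hI1 hI2 measurableSet_Ioo hb
      _ = (∫ y in Set.Ioo (-1:ℝ) 1, |y|) * F x := MeasureTheory.integral_mul_const _ _
      _ = F x := by rw [myAbsInt, one_mul]
  have stepA : (∫ p in Omg L, (w₂ p)^2) ≤ ∫ p in Omg L, (d1 w₁ p)^2 := by
    rw [fub1, fub2]
    exact MeasureTheory.setIntegral_mono_on hIw2' hIF measurableSet_Ioo hinner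
  have stepB : (∫ p in Omg L, (d1 w₁ p)^2) ≤ gradNrmSq L w₁ := by
    unfold gradNrmSq
    exact MeasureTheory.setIntegral_mono_on hId1 hIgrad hmeasOmg
      (fun p _ => by nlinarith [sq_nonneg (d2 w₁ p)])
  have young : ∀ A B : ℝ, A * B ≤ c/2 * A^2 + 1/(2*c) * B^2 := by
    intro A B
    rw [← sub_nonneg]
    have he : c/2 * A^2 + 1/(2*c) * B^2 - A * B = (c*A - B)^2/(2*c) := by
      field_simp
      ring
    rw [he]
    positivity
  have hpt : ∀ p : ℝ × ℝ, |ξ p * w₂ p| ≤ c/2 * (ξ p)^2 + 1/(2*c) * (w₂ p)^2 := by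
    intro p
    calc |ξ p * w₂ p| = |ξ p| * |w₂ p| := abs_mul _ _
      _ ≤ c/2 * |ξ p|^2 + 1/(2*c) * |w₂ p|^2 := young _ _
      _ = c/2 * (ξ p)^2 + 1/(2*c) * (w₂ p)^2 := by rw [sq_abs, sq_abs]
  have hIrhs : IntegrableOn (fun p => c/2 * (ξ p)^2 + 1/(2*c) * (w₂ p)^2) (Omg L) :=
    myIntegrableOnOmg ((continuous_const.mul (hcξ.pow 2)).add (continuous_const.mul (hcw₂.pow 2)))
  have habs : |∫ p in Omg L, ξ p * w₂ p| ≤ ∫ p in Omg L, |ξ p * w₂ p| := by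
    simpa [Real.norm_eq_abs, abs_mul] using
      MeasureTheory.norm_integral_le_integral_norm (μ := volume.restrict (Omg L))
        (fun p => ξ p * w₂ p)
  have hsplit : (∫ p in Omg L, |ξ p * w₂ p|)
      ≤ c/2 * (∫ p in Omg L, (ξ p)^2) + 1/(2*c) * (∫ p in Omg L, (w₂ p)^2) := by
    calc (∫ p in Omg L, |ξ p * w₂ p|)
        ≤ ∫ p in Omg L, (c/2 * (ξ p)^2 + 1/(2*c) * (w₂ p)^2) :=
          MeasureTheory.setIntegral_mono_on hIabs hIrhs hmeasOmg (fun p _ => hpt p)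
      _ = c/2 * (∫ p in Omg L, (ξ p)^2) + 1/(2*c) * (∫ p in Omg L, (w₂ p)^2) := by
          rw [MeasureTheory.integral_add (hIξ2.const_mul _) (hIw2.const_mul _),
            MeasureTheory.integral_const_mul, MeasureTheory.integral_const_mul]
  have hW : (∫ p in Omg L, (w₂ p)^2) ≤ gradNrmSq L w₁ := le_trans stepA stepB
  have hξ2 : (∫ p in Omg L, (ξ p)^2) ≤ lam⁻¹ * gradNrmSq L ξ := hpoincare
  have hκn : κ ≠ 0 := hκ.ne'
  have hlamn : lam ≠ 0 := hlam.ne'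
  calc |∫ p in Omg L, ξ p * w₂ p|
      ≤ c/2 * (∫ p in Omg L, (ξ p)^2) + 1/(2*c) * (∫ p in Omg L, (w₂ p)^2) :=
        le_trans habs hsplit
    _ ≤ c/2 * (lam⁻¹ * gradNrmSq L ξ) + 1/(2*c) * gradNrmSq L w₁ := by
        have h1 : c/2 * (∫ p in Omg L, (ξ p)^2) ≤ c/2 * (lam⁻¹ * gradNrmSq L ξ) :=
          mul_le_mul_of_nonneg_left hξ2 (by positivity)
        have h2 : 1/(2*c) * (∫ p in Omg L, (w₂ p)^2) ≤ 1/(2*c) * gradNrmSq L w₁ :=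
          mul_le_mul_of_nonneg_left hW (by positivity)
        linarith
    _ = κ / 20 * gradNrmSq L ξ + 5 / (κ * lam) * gradNrmSq L w₁ := by
        rw [hc]
        field_simp
        ring
end
end

section
/- Let L>0, Ω=(0,L)×(-1,1), and κ,ν>0. Let w=(w₁,w₂) be a smooth Ω-periodic, divergence-free, symmetric vector field and let ξ be a smooth Ω-periodic scalar function. Then |∫_Ω ξ(x) Δw₂(x) dx| ≤ (κ/20)‖∇ξ‖² + (ν/20)‖Δw₂‖² + (125/(νκ²))‖∇w₁‖². -/
open MeasureTheory Real Filter

noncomputable section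

variable {f g : ℝ × ℝ → ℝ} {L : ℝ}

lemma contDiff_dv (hf : ContDiff ℝ (⊤ : ℕ∞) f) (v : ℝ × ℝ) :
    ContDiff ℝ (⊤ : ℕ∞) (fun p => fderiv ℝ f p v) :=
  (hf.fderiv_right (by exact_mod_cast le_top)).clm_apply contDiff_const

lemma contDiff_d1 (hf : ContDiff ℝ (⊤ : ℕ∞) f) : ContDiff ℝ (⊤ : ℕ∞) (d1 f) := contDiff_dv hf _
lemma contDiff_d2 (hf : ContDiff ℝ (⊤ : ℕ∞) f) : ContDiff ℝ (⊤ : ℕ∞) (d2 f) := contDiff_dv hf _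

lemma fderiv_shift (hf : ContDiff ℝ (⊤ : ℕ∞) f) (c : ℝ × ℝ) (hper : ∀ q, f (q + c) = f q)
    (p : ℝ × ℝ) : fderiv ℝ f (p + c) = fderiv ℝ f p := by
  have h1 : HasFDerivAt (fun q : ℝ × ℝ => f (q + c)) (fderiv ℝ f (p + c)) p := by
    have := ((hf.differentiable (by simp) (p + c)).hasFDerivAt).comp p
      ((hasFDerivAt_id p).add_const c)
    simpa [Function.comp_def] using this
  have h2 : HasFDerivAt f (fderiv ℝ f (p + c)) p := by
    have : (fun q : ℝ × ℝ => f (q + c)) = f := funext hper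
    rwa [this] at h1
  exact (h2.fderiv).symm

lemma periodic_dv (hf : ContDiff ℝ (⊤ : ℕ∞) f) (hp : OmgPeriodic L f) (v : ℝ × ℝ) :
    OmgPeriodic L (fun p => fderiv ℝ f p v) := by
  constructor
  · intro x y
    have := fderiv_shift hf (L, 0)
      (fun q => by rw [show q + (L, 0) = (q.1 + L, q.2) by simp [Prod.ext_iff]]; exact hp.1 q.1 q.2) (x, y)
    rw [show (x, y) + (L, 0) = (x + L, y) by simp [Prod.ext_iff]] at this
    show (fderiv ℝ f (x + L, y)) v = (fderiv ℝ f (x, y)) v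
    rw [this]
  · intro x y
    have := fderiv_shift hf (0, 2)
      (fun q => by rw [show q + (0, 2) = (q.1, q.2 + 2) by simp [Prod.ext_iff]]; exact hp.2 q.1 q.2) (x, y)
    rw [show (x, y) + (0, 2) = (x, y + 2) by simp [Prod.ext_iff]] at this
    show (fderiv ℝ f (x, y + 2)) v = (fderiv ℝ f (x, y)) v
    rw [this]

lemma periodic_d1 (hf : ContDiff ℝ (⊤ : ℕ∞) f) (hp : OmgPeriodic L f) : OmgPeriodic L (d1 f) :=
  periodic_dv hf hp _
lemma periodic_d2 (hf : ContDiff ℝ (⊤ : ℕ∞) f) (hp : OmgPeriodic L f) : OmgPeriodic L (d2 f) :=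
  periodic_dv hf hp _

lemma periodic_mul (hp : OmgPeriodic L f) (hq : OmgPeriodic L g) :
    OmgPeriodic L (fun p => f p * g p) :=
  ⟨fun x y => by simp [hp.1, hq.1], fun x y => by simp [hp.2, hq.2]⟩

lemma hasDerivAt_slice1 (hf : ContDiff ℝ (⊤ : ℕ∞) f) (x y : ℝ) :
    HasDerivAt (fun t => f (t, y)) (d1 f (x, y)) x := by
  have h := ((hf.differentiable (by simp) (x, y)).hasFDerivAt).comp_hasDerivAt x
    ((hasDerivAt_id x).prodMk (hasDerivAt_const x y))
  simpa [d1, Function.comp_def] using h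

lemma hasDerivAt_slice2 (hf : ContDiff ℝ (⊤ : ℕ∞) f) (x y : ℝ) :
    HasDerivAt (fun t => f (x, t)) (d2 f (x, y)) y := by
  have h := ((hf.differentiable (by simp) (x, y)).hasFDerivAt).comp_hasDerivAt y
    ((hasDerivAt_const y x).prodMk (hasDerivAt_id y))
  simpa [d2, Function.comp_def] using h

lemma intOn (hf : Continuous f) (L : ℝ) : IntegrableOn f (Omg L) := by
  have h : IntegrableOn f (Set.Icc 0 L ×ˢ Set.Icc (-1 : ℝ) 1) :=
    hf.continuousOn.integrableOn_compact (isCompact_Icc.prod isCompact_Icc)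
  exact h.mono_set (Set.prod_mono Set.Ioo_subset_Icc_self Set.Ioo_subset_Icc_self)

lemma fubini (hf : Continuous f) (L : ℝ) :
    ∫ p in Omg L, f p = ∫ x in Set.Ioo 0 L, ∫ y in Set.Ioo (-1 : ℝ) 1, f (x, y) := by
  rw [Omg, MeasureTheory.Measure.volume_eq_prod]
  exact MeasureTheory.setIntegral_prod f (by rw [← MeasureTheory.Measure.volume_eq_prod]; exact intOn hf L)

lemma fubini' (hf : Continuous f) (L : ℝ) :
    ∫ p in Omg L, f p = ∫ y in Set.Ioo (-1 : ℝ) 1, ∫ x in Set.Ioo 0 L, f (x, y) := by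
  rw [fubini hf L]
  apply MeasureTheory.integral_integral_swap
  rw [Function.uncurry_def]
  rw [MeasureTheory.Measure.prod_restrict, ← MeasureTheory.Measure.volume_eq_prod]
  exact intOn hf L

lemma cont_d1 (hf : ContDiff ℝ (⊤ : ℕ∞) f) : Continuous (d1 f) := (contDiff_d1 hf).continuous
lemma cont_d2 (hf : ContDiff ℝ (⊤ : ℕ∞) f) : Continuous (d2 f) := (contDiff_d2 hf).continuous

lemma integral_d1_zero (hL : 0 < L) (hf : ContDiff ℝ (⊤ : ℕ∞) f) (hp : OmgPeriodic L f) :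
    ∫ p in Omg L, d1 f p = 0 := by
  rw [fubini' (cont_d1 hf) L]
  have inner : ∀ y : ℝ, ∫ x in Set.Ioo 0 L, d1 f (x, y) = 0 := by
    intro y
    rw [← MeasureTheory.integral_Ioc_eq_integral_Ioo, ← intervalIntegral.integral_of_le hL.le]
    have := intervalIntegral.integral_eq_sub_of_hasDerivAt
      (f := fun t => f (t, y)) (f' := fun t => d1 f (t, y))
      (fun x _ => hasDerivAt_slice1 hf x y)
      (((cont_d1 hf).comp (continuous_id.prodMk continuous_const)).intervalIntegrable 0 L)
    rw [this]
    have : f (L, y) = f (0, y) := by simpa using hp.1 0 y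
    simp [this]
  simp [inner]

lemma integral_d2_zero (hL : 0 < L) (hf : ContDiff ℝ (⊤ : ℕ∞) f) (hp : OmgPeriodic L f) :
    ∫ p in Omg L, d2 f p = 0 := by
  rw [fubini (cont_d2 hf) L]
  have inner : ∀ x : ℝ, ∫ y in Set.Ioo (-1 : ℝ) 1, d2 f (x, y) = 0 := by
    intro x
    rw [← MeasureTheory.integral_Ioc_eq_integral_Ioo,
      ← intervalIntegral.integral_of_le (by norm_num : (-1 : ℝ) ≤ 1)]
    have := intervalIntegral.integral_eq_sub_of_hasDerivAt
      (f := fun t => f (x, t)) (f' := fun t => d2 f (x, t))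
      (fun y _ => hasDerivAt_slice2 hf x y)
      (((cont_d2 hf).comp (continuous_const.prodMk continuous_id)).intervalIntegrable (-1) 1)
    rw [this]
    have : f (x, 1) = f (x, -1) := by have h := hp.2 x (-1); norm_num at h; exact h
    simp [this]
  simp [inner]

lemma d1_mul (hf : ContDiff ℝ (⊤ : ℕ∞) f) (hg : ContDiff ℝ (⊤ : ℕ∞) g) (p : ℝ × ℝ) :
    d1 (fun q => f q * g q) p = f p * d1 g p + d1 f p * g p := by
  have := fderiv_fun_mul (𝕜 := ℝ) (hf.differentiable (by simp) p)
    (hg.differentiable (by simp) p)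
  simp only [d1, this]
  simp [mul_comm]

lemma d2_mul (hf : ContDiff ℝ (⊤ : ℕ∞) f) (hg : ContDiff ℝ (⊤ : ℕ∞) g) (p : ℝ × ℝ) :
    d2 (fun q => f q * g q) p = f p * d2 g p + d2 f p * g p := by
  have := fderiv_fun_mul (𝕜 := ℝ) (hf.differentiable (by simp) p)
    (hg.differentiable (by simp) p)
  simp only [d2, this]
  simp [mul_comm]

lemma ibp1 (hL : 0 < L) (hf : ContDiff ℝ (⊤ : ℕ∞) f) (hg : ContDiff ℝ (⊤ : ℕ∞) g)
    (hp : OmgPeriodic L f) (hq : OmgPeriodic L g) :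
    ∫ p in Omg L, f p * d1 g p = - ∫ p in Omg L, d1 f p * g p := by
  have hz := integral_d1_zero hL (hf.mul hg) (periodic_mul hp hq)
  have heq : ∀ p : ℝ × ℝ, d1 (fun q => f q * g q) p = f p * d1 g p + d1 f p * g p :=
    d1_mul hf hg
  rw [MeasureTheory.setIntegral_congr_fun (by rw [Omg]; exact (measurableSet_Ioo.prod measurableSet_Ioo)) (fun p _ => heq p)] at hz
  rw [MeasureTheory.integral_add (f := fun p => f p * d1 g p) (g := fun p => d1 f p * g p) (intOn (hf.continuous.mul (cont_d1 hg)) L)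
    (intOn ((cont_d1 hf).mul hg.continuous) L)] at hz
  linarith

lemma ibp2 (hL : 0 < L) (hf : ContDiff ℝ (⊤ : ℕ∞) f) (hg : ContDiff ℝ (⊤ : ℕ∞) g)
    (hp : OmgPeriodic L f) (hq : OmgPeriodic L g) :
    ∫ p in Omg L, f p * d2 g p = - ∫ p in Omg L, d2 f p * g p := by
  have hz := integral_d2_zero hL (hf.mul hg) (periodic_mul hp hq)
  have heq : ∀ p : ℝ × ℝ, d2 (fun q => f q * g q) p = f p * d2 g p + d2 f p * g p :=
    d2_mul hf hg
  rw [MeasureTheory.setIntegral_congr_fun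
    (by rw [Omg]; exact (measurableSet_Ioo.prod measurableSet_Ioo)) (fun p _ => heq p)] at hz
  rw [MeasureTheory.integral_add (f := fun p => f p * d2 g p) (g := fun p => d2 f p * g p) (intOn (hf.continuous.mul (cont_d2 hg)) L)
    (intOn ((cont_d2 hf).mul hg.continuous) L)] at hz
  linarith

lemma cs_integral {α : Type*} [MeasurableSpace α] (μ : Measure α) (f g : α → ℝ)
    (hf : Integrable (fun a => f a ^ 2) μ) (hg : Integrable (fun a => g a ^ 2) μ)
    (hfg : Integrable (fun a => f a * g a) μ) :
    (∫ a, f a * g a ∂μ) ^ 2 ≤ (∫ a, f a ^ 2 ∂μ) * (∫ a, g a ^ 2 ∂μ) := by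
  set A := ∫ a, f a ^ 2 ∂μ
  set B := ∫ a, f a * g a ∂μ
  set C := ∫ a, g a ^ 2 ∂μ
  have key : ∀ t : ℝ, 0 ≤ A * (t * t) + (2 * B) * t + C := by
    intro t
    have h0 : 0 ≤ ∫ a, (t * f a + g a) ^ 2 ∂μ :=
      MeasureTheory.integral_nonneg fun a => sq_nonneg _
    have hexp : ∀ a, (t * f a + g a) ^ 2
        = t ^ 2 * f a ^ 2 + 2 * t * (f a * g a) + g a ^ 2 := fun a => by ring
    rw [MeasureTheory.integral_congr_ae (Filter.Eventually.of_forall hexp)] at h0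
    rw [MeasureTheory.integral_add (f := fun a => t ^ 2 * f a ^ 2 + 2 * t * (f a * g a))
        (g := fun a => g a ^ 2) ((hf.const_mul _).add (hfg.const_mul _)) hg,
      MeasureTheory.integral_add (f := fun a => t ^ 2 * f a ^ 2)
        (g := fun a => 2 * t * (f a * g a)) (hf.const_mul _) (hfg.const_mul _),
      MeasureTheory.integral_const_mul, MeasureTheory.integral_const_mul] at h0
    nlinarith [h0]
  have := discrim_le_zero key
  rw [discrim] at this
  nlinarith [this]

lemma cs2_integral {α : Type*} [MeasurableSpace α] (μ : Measure α) (f₁ f₂ g₁ g₂ : α → ℝ)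
    (hf : Integrable (fun a => f₁ a ^ 2 + f₂ a ^ 2) μ)
    (hg : Integrable (fun a => g₁ a ^ 2 + g₂ a ^ 2) μ)
    (hfg : Integrable (fun a => f₁ a * g₁ a + f₂ a * g₂ a) μ) :
    (∫ a, (f₁ a * g₁ a + f₂ a * g₂ a) ∂μ) ^ 2
      ≤ (∫ a, (f₁ a ^ 2 + f₂ a ^ 2) ∂μ) * (∫ a, (g₁ a ^ 2 + g₂ a ^ 2) ∂μ) := by
  set A := ∫ a, (f₁ a ^ 2 + f₂ a ^ 2) ∂μ
  set B := ∫ a, (f₁ a * g₁ a + f₂ a * g₂ a) ∂μ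
  set C := ∫ a, (g₁ a ^ 2 + g₂ a ^ 2) ∂μ
  have key : ∀ t : ℝ, 0 ≤ A * (t * t) + (2 * B) * t + C := by
    intro t
    have h0 : 0 ≤ ∫ a, ((t * f₁ a + g₁ a) ^ 2 + (t * f₂ a + g₂ a) ^ 2) ∂μ :=
      MeasureTheory.integral_nonneg fun a => by positivity
    have hexp : ∀ a, (t * f₁ a + g₁ a) ^ 2 + (t * f₂ a + g₂ a) ^ 2
        = t ^ 2 * (f₁ a ^ 2 + f₂ a ^ 2) + 2 * t * (f₁ a * g₁ a + f₂ a * g₂ a)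
          + (g₁ a ^ 2 + g₂ a ^ 2) := fun a => by ring
    rw [MeasureTheory.integral_congr_ae (Filter.Eventually.of_forall hexp)] at h0
    rw [MeasureTheory.integral_add
        (f := fun a => t ^ 2 * (f₁ a ^ 2 + f₂ a ^ 2) + 2 * t * (f₁ a * g₁ a + f₂ a * g₂ a))
        (g := fun a => g₁ a ^ 2 + g₂ a ^ 2) ((hf.const_mul _).add (hfg.const_mul _)) hg,
      MeasureTheory.integral_add (f := fun a => t ^ 2 * (f₁ a ^ 2 + f₂ a ^ 2))
        (g := fun a => 2 * t * (f₁ a * g₁ a + f₂ a * g₂ a)) (hf.const_mul _) (hfg.const_mul _),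
      MeasureTheory.integral_const_mul, MeasureTheory.integral_const_mul] at h0
    nlinarith [h0]
  have := discrim_le_zero key
  rw [discrim] at this
  nlinarith [this]

lemma intOn1 {φ : ℝ → ℝ} (hφ : Continuous φ) (a b : ℝ) : IntegrableOn φ (Set.Ioo a b) :=
  (hφ.integrableOn_Icc).mono_set Set.Ioo_subset_Icc_self

lemma sq_setIntegral_le {φ : ℝ → ℝ} (hφ : Continuous φ) {s : Set ℝ}
    (hsub : s ⊆ Set.Ioo (-1 : ℝ) 1) :
    (∫ t in s, φ t) ^ 2 ≤ (volume s).toReal * ∫ t in Set.Ioo (-1 : ℝ) 1, (φ t) ^ 2 := by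
  have hfin : volume s < ⊤ :=
    lt_of_le_of_lt (measure_mono hsub) (by rw [Real.volume_Ioo]; exact ENNReal.ofReal_lt_top)
  have h1 : IntegrableOn (fun _ : ℝ => (1 : ℝ)) s := integrableOn_const hfin.ne
  have hφs : IntegrableOn (fun t => φ t ^ 2) s :=
    (intOn1 (hφ.pow 2) (-1) 1).mono_set hsub
  have hφs' : IntegrableOn φ s := (intOn1 hφ (-1) 1).mono_set hsub
  have hcs := cs_integral (volume.restrict s) (fun _ => (1 : ℝ)) φ (by simp only [one_pow]; exact h1) hφs
    (by simpa only [one_mul] using hφs'.integrable)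
  simp only [one_mul, one_pow] at hcs
  have hconst : ∫ _t in s, (1 : ℝ) = (volume s).toReal := by
    simp [MeasureTheory.setIntegral_const, Measure.real]
  rw [hconst] at hcs
  have hmono : ∫ t in s, φ t ^ 2 ≤ ∫ t in Set.Ioo (-1 : ℝ) 1, φ t ^ 2 :=
    MeasureTheory.setIntegral_mono_set (intOn1 (hφ.pow 2) (-1) 1)
      (Filter.Eventually.of_forall fun t => sq_nonneg _) (HasSubset.Subset.eventuallyLE hsub)
  have h0 : (0 : ℝ) ≤ (volume s).toReal := ENNReal.toReal_nonneg
  nlinarith [hcs, hmono, h0]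

lemma abs_integral_one : ∫ y in Set.Ioo (-1 : ℝ) 1, |y| = 1 := by
  rw [← MeasureTheory.integral_Ioc_eq_integral_Ioo,
    ← intervalIntegral.integral_of_le (by norm_num : (-1 : ℝ) ≤ 1)]
  have h1 : ∫ y in (-1 : ℝ)..0, |y| = 1 / 2 := by
    rw [intervalIntegral.integral_congr (g := fun y => -y)
      (fun y hy => by
        rw [Set.uIcc_of_le (by norm_num : (-1:ℝ) ≤ 0)] at hy
        exact abs_of_nonpos hy.2)]
    rw [intervalIntegral.integral_neg, integral_id]
    norm_num
  have h2 : ∫ y in (0 : ℝ)..1, |y| = 1 / 2 := by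
    rw [intervalIntegral.integral_congr (g := fun y => y)
      (fun y hy => by
        rw [Set.uIcc_of_le (by norm_num : (0:ℝ) ≤ 1)] at hy
        exact abs_of_nonneg hy.1)]
    rw [integral_id]; norm_num
  have := intervalIntegral.integral_add_adjacent_intervals
    ((continuous_abs : Continuous fun y : ℝ => |y|).intervalIntegrable (μ := volume) (-1 : ℝ) 0)
    ((continuous_abs : Continuous fun y : ℝ => |y|).intervalIntegrable (μ := volume) 0 1)
  rw [← this, h1, h2]; norm_num

lemma poincare (hL : 0 < L) {w : ℝ × ℝ → ℝ} (hw : ContDiff ℝ (⊤ : ℕ∞) w)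
    (hodd : ∀ x y : ℝ, w (x, -y) = -w (x, y)) :
    ∫ p in Omg L, (w p) ^ 2 ≤ ∫ p in Omg L, (d2 w p) ^ 2 := by
  have hzero : ∀ x, w (x, 0) = 0 := fun x => by
    have := hodd x 0; norm_num at this; linarith
  set G : ℝ → ℝ := fun x => ∫ t in Set.Ioo (-1 : ℝ) 1, (d2 w (x, t)) ^ 2 with hG
  have key : ∀ x : ℝ, ∀ y ∈ Set.Ioo (-1 : ℝ) 1, (w (x, y)) ^ 2 ≤ |y| * G x := by
    intro x y hy
    have hcont2 : Continuous (fun t => d2 w (x, t)) :=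
      (cont_d2 hw).comp (continuous_const.prodMk continuous_id)
    have hrep : w (x, y) = ∫ t in (0 : ℝ)..y, d2 w (x, t) := by
      have h := intervalIntegral.integral_eq_sub_of_hasDerivAt
        (f := fun t => w (x, t)) (f' := fun t => d2 w (x, t))
        (fun t _ => hasDerivAt_slice2 hw x t) (hcont2.intervalIntegrable (μ := volume) 0 y)
      rw [h]; simp [hzero x]
    rcases le_or_gt 0 y with h0 | h0
    · have hsub : Set.Ioc (0 : ℝ) y ⊆ Set.Ioo (-1 : ℝ) 1 := fun t ht =>
        ⟨by linarith [ht.1], lt_of_le_of_lt ht.2 hy.2⟩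
      have hsq := sq_setIntegral_le hcont2 hsub
      have hvol : (volume (Set.Ioc (0 : ℝ) y)).toReal = y := by
        rw [Real.volume_Ioc, ENNReal.toReal_ofReal (by linarith)]; ring
      rw [hrep, intervalIntegral.integral_of_le h0]
      rw [hvol] at hsq
      rw [abs_of_nonneg h0]
      exact hsq
    · have hsub : Set.Ioc y (0 : ℝ) ⊆ Set.Ioo (-1 : ℝ) 1 := fun t ht =>
        ⟨lt_of_lt_of_le hy.1 (le_of_lt ht.1), lt_of_le_of_lt ht.2 (by norm_num)⟩
      have hsq := sq_setIntegral_le hcont2 hsub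
      have hvol : (volume (Set.Ioc y (0 : ℝ))).toReal = -y := by
        rw [Real.volume_Ioc, ENNReal.toReal_ofReal (by linarith)]; ring
      rw [hrep, intervalIntegral.integral_symm, intervalIntegral.integral_of_le h0.le]
      rw [hvol] at hsq
      rw [abs_of_neg h0, neg_sq]
      exact hsq
  -- now integrate
  have hcw2 : Continuous fun p : ℝ × ℝ => (w p) ^ 2 := (hw.continuous).pow 2
  have hcd2 : Continuous fun p : ℝ × ℝ => (d2 w p) ^ 2 := (cont_d2 hw).pow 2
  rw [fubini hcw2 L, fubini hcd2 L]
  have hprod : Integrable (fun z : ℝ × ℝ => (w z) ^ 2)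
      ((volume.restrict (Set.Ioo 0 L)).prod (volume.restrict (Set.Ioo (-1 : ℝ) 1))) := by
    rw [MeasureTheory.Measure.prod_restrict, ← MeasureTheory.Measure.volume_eq_prod]
    exact intOn hcw2 L
  have hprod2 : Integrable (fun z : ℝ × ℝ => (d2 w z) ^ 2)
      ((volume.restrict (Set.Ioo 0 L)).prod (volume.restrict (Set.Ioo (-1 : ℝ) 1))) := by
    rw [MeasureTheory.Measure.prod_restrict, ← MeasureTheory.Measure.volume_eq_prod]
    exact intOn hcd2 L
  apply MeasureTheory.setIntegral_mono_on
  · exact hprod.integral_prod_left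
  · exact hprod2.integral_prod_left
  · exact measurableSet_Ioo
  · intro x _
    have inner : ∫ y in Set.Ioo (-1 : ℝ) 1, (w (x, y)) ^ 2
        ≤ ∫ y in Set.Ioo (-1 : ℝ) 1, |y| * G x := by
      apply MeasureTheory.setIntegral_mono_on
      · exact intOn1 ((hcw2.comp (continuous_const.prodMk continuous_id))) (-1) 1
      · exact intOn1 ((continuous_abs.mul continuous_const)) (-1) 1
      · exact measurableSet_Ioo
      · exact key x
    have : ∫ y in Set.Ioo (-1 : ℝ) 1, |y| * G x = G x := by
      rw [MeasureTheory.integral_mul_const, abs_integral_one, one_mul]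
    rw [this] at inner
    exact inner



lemma omg_meas (L : ℝ) : MeasurableSet (Omg L) := by
  rw [Omg]; exact measurableSet_Ioo.prod measurableSet_Ioo


lemma amgm4 {I a r s : ℝ} (hI0 : 0 ≤ I) (ha : 0 ≤ a) (hr : 0 ≤ r) (hs : 0 ≤ s)
    (h : I ^ 4 ≤ 64 * a ^ 2 * r * s) : I ≤ a + r + s := by
  have e1 : 4 * a * (r + s) ≤ (a + r + s) ^ 2 := by nlinarith [sq_nonneg (a - (r + s))]
  have e2 : 4 * r * s ≤ (r + s) ^ 2 := by nlinarith [sq_nonneg (r - s)]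
  have t0 : 0 ≤ 4 * a * (r + s) := by positivity
  have t1 : (4 * a * (r + s)) ^ 2 ≤ ((a + r + s) ^ 2) ^ 2 := by
    exact pow_le_pow_left₀ t0 e1 2
  have t2 : 16 * a ^ 2 * (4 * r * s) ≤ 16 * a ^ 2 * (r + s) ^ 2 :=
    mul_le_mul_of_nonneg_left e2 (by positivity)
  have t3 : I ^ 4 ≤ (a + r + s) ^ 4 := by nlinarith [t1, t2]
  exact le_of_pow_le_pow_left₀ (by norm_num) (by linarith) t3

/-- estimate (3.15) of the paper:
`|∫_Ω ξ Δw₂| ≤ (κ/20)‖∇ξ‖² + (ν/20)‖Δw₂‖² + (125/(νκ²))‖∇w₁‖²`. -/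
theorem buoyancy_laplacian_estimate (L : ℝ) (hL : 0 < L) (κ ν : ℝ) (hκ : 0 < κ) (hν : 0 < ν)
    (w₁ w₂ ξ : ℝ × ℝ → ℝ)
    (hw₁ : ContDiff ℝ (⊤ : ℕ∞) w₁) (hw₂ : ContDiff ℝ (⊤ : ℕ∞) w₂) (hξ : ContDiff ℝ (⊤ : ℕ∞) ξ)
    (hpw₁ : OmgPeriodic L w₁) (hpw₂ : OmgPeriodic L w₂) (hpξ : OmgPeriodic L ξ)
    (hdiv : DivFree w₁ w₂) (hsym : Symm w₁ w₂) :
    |∫ p in Omg L, ξ p * lap w₂ p| ≤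
      κ / 20 * gradNrmSq L ξ + ν / 20 * lapNrmSq L w₂
        + 125 / (ν * κ ^ 2) * gradNrmSq L w₁ := by
  have omeas := omg_meas L
  have hcξ := hξ.continuous
  have hcw₂ := hw₂.continuous
  have hcd1ξ := cont_d1 hξ
  have hcd2ξ := cont_d2 hξ
  have hcd1w₂ := cont_d1 hw₂
  have hcd2w₂ := cont_d2 hw₂
  have hcd11 := cont_d1 (contDiff_d1 hw₂)
  have hcd22 := cont_d2 (contDiff_d2 hw₂)
  have hclap : Continuous (lap w₂) := by
    have : lap w₂ = fun p => d1 (d1 w₂) p + d2 (d2 w₂) p := rfl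
    rw [this]; exact hcd11.add hcd22
  -- Step 1: integration by parts for ξ against lap w₂
  have hsplit : ∫ p in Omg L, ξ p * lap w₂ p
      = (∫ p in Omg L, ξ p * d1 (d1 w₂) p) + ∫ p in Omg L, ξ p * d2 (d2 w₂) p := by
    rw [← MeasureTheory.integral_add (f := fun p => ξ p * d1 (d1 w₂) p) (g := fun p => ξ p * d2 (d2 w₂) p) (intOn (hcξ.mul hcd11) L) (intOn (hcξ.mul hcd22) L)]
    exact MeasureTheory.setIntegral_congr_fun omeas (fun p _ => by simp [lap]; ring)
  have h1 := ibp1 hL hξ (contDiff_d1 hw₂) hpξ (periodic_d1 hw₂ hpw₂)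
  have h2 := ibp2 hL hξ (contDiff_d2 hw₂) hpξ (periodic_d2 hw₂ hpw₂)
  have hJ : ∫ p in Omg L, ξ p * lap w₂ p
      = -∫ p in Omg L, (d1 ξ p * d1 w₂ p + d2 ξ p * d2 w₂ p) := by
    have hadd := MeasureTheory.integral_add (μ := volume.restrict (Omg L))
      (f := fun p => d1 ξ p * d1 w₂ p) (g := fun p => d2 ξ p * d2 w₂ p)
      (intOn (hcd1ξ.mul hcd1w₂) L) (intOn (hcd2ξ.mul hcd2w₂) L)
    rw [hsplit, h1, h2, hadd]
    ring
  set A := gradNrmSq L ξ with hAdef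
  set B := lapNrmSq L w₂ with hBdef
  set W := gradNrmSq L w₁ with hWdef
  set P := gradNrmSq L w₂ with hPdef
  set M := ∫ p in Omg L, (w₂ p) ^ 2 with hMdef
  set I := |∫ p in Omg L, ξ p * lap w₂ p| with hIdef
  have hA0 : 0 ≤ A := by
    rw [hAdef, gradNrmSq]
    exact MeasureTheory.setIntegral_nonneg omeas fun p _ => by positivity
  have hB0 : 0 ≤ B := by
    rw [hBdef, lapNrmSq]
    exact MeasureTheory.setIntegral_nonneg omeas fun p _ => sq_nonneg _
  have hW0 : 0 ≤ W := by
    rw [hWdef, gradNrmSq]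
    exact MeasureTheory.setIntegral_nonneg omeas fun p _ => by positivity
  have hP0 : 0 ≤ P := by
    rw [hPdef, gradNrmSq]
    exact MeasureTheory.setIntegral_nonneg omeas fun p _ => by positivity
  have hM0 : 0 ≤ M := by
    rw [hMdef]
    exact MeasureTheory.setIntegral_nonneg omeas fun p _ => sq_nonneg _
  have hI0 : 0 ≤ I := abs_nonneg _
  -- Step 2: Cauchy-Schwarz for the gradients
  have hI2 : I ^ 2 ≤ A * P := by
    have hcs := cs2_integral (volume.restrict (Omg L)) (d1 ξ) (d2 ξ) (d1 w₂) (d2 w₂)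
      (intOn ((hcd1ξ.pow 2).add (hcd2ξ.pow 2)) L)
      (intOn ((hcd1w₂.pow 2).add (hcd2w₂.pow 2)) L)
      (intOn ((hcd1ξ.mul hcd1w₂).add (hcd2ξ.mul hcd2w₂)) L)
    rw [hIdef, sq_abs, hJ, neg_sq, hAdef, hPdef, gradNrmSq, gradNrmSq]
    exact hcs
  -- Step 3: ‖∇w₂‖² = -∫ w₂ Δw₂ and Cauchy-Schwarz
  have h3 := ibp1 hL hw₂ (contDiff_d1 hw₂) hpw₂ (periodic_d1 hw₂ hpw₂)
  have h4 := ibp2 hL hw₂ (contDiff_d2 hw₂) hpw₂ (periodic_d2 hw₂ hpw₂)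
  have hP_eq : P = -∫ p in Omg L, w₂ p * lap w₂ p := by
    have hsplit2 : ∫ p in Omg L, w₂ p * lap w₂ p
        = (∫ p in Omg L, w₂ p * d1 (d1 w₂) p) + ∫ p in Omg L, w₂ p * d2 (d2 w₂) p := by
      rw [← MeasureTheory.integral_add (f := fun p => w₂ p * d1 (d1 w₂) p) (g := fun p => w₂ p * d2 (d2 w₂) p) (intOn (hcw₂.mul hcd11) L) (intOn (hcw₂.mul hcd22) L)]
      exact MeasureTheory.setIntegral_congr_fun omeas (fun p _ => by simp [lap]; ring)
    have hadd := MeasureTheory.integral_add (μ := volume.restrict (Omg L))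
      (f := fun p => (d1 w₂ p) ^ 2) (g := fun p => (d2 w₂ p) ^ 2)
      (intOn (f := fun p => (d1 w₂ p) ^ 2) ((hcd1w₂.pow 2)) L) (intOn (f := fun p => (d2 w₂ p) ^ 2) ((hcd2w₂.pow 2)) L)
    have hc1 : ∫ p in Omg L, d1 w₂ p * d1 w₂ p = ∫ p in Omg L, (d1 w₂ p) ^ 2 :=
      MeasureTheory.setIntegral_congr_fun omeas (fun p _ => (sq (d1 w₂ p)).symm ▸ (pow_two (d1 w₂ p)).symm)
    have hc2 : ∫ p in Omg L, d2 w₂ p * d2 w₂ p = ∫ p in Omg L, (d2 w₂ p) ^ 2 :=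
      MeasureTheory.setIntegral_congr_fun omeas (fun p _ => (pow_two (d2 w₂ p)).symm)
    rw [hsplit2, h3, h4, hc1, hc2, hPdef, gradNrmSq, hadd]
    ring
  have hPsq : P ^ 2 ≤ M * B := by
    have hcs := cs_integral (volume.restrict (Omg L)) w₂ (lap w₂)
      (intOn (hcw₂.pow 2) L) (intOn (hclap.pow 2) L) (intOn (hcw₂.mul hclap) L)
    rw [hP_eq, neg_sq, hMdef, hBdef, lapNrmSq]
    exact hcs
  -- Step 4: Poincaré and divergence-free
  have hM_le : M ≤ W := by
    have hp1 := poincare hL hw₂ hsym.2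
    have heq : ∫ p in Omg L, (d2 w₂ p) ^ 2 = ∫ p in Omg L, (d1 w₁ p) ^ 2 :=
      MeasureTheory.setIntegral_congr_fun omeas (fun p _ => by
        have h := hdiv p
        have : d2 w₂ p = -d1 w₁ p := by linarith
        rw [this, neg_sq])
    have hle2 : ∫ p in Omg L, (d1 w₁ p) ^ 2
        ≤ ∫ p in Omg L, ((d1 w₁ p) ^ 2 + (d2 w₁ p) ^ 2) :=
      MeasureTheory.setIntegral_mono_on (intOn ((cont_d1 hw₁).pow 2) L)
        (intOn (((cont_d1 hw₁).pow 2).add ((cont_d2 hw₁).pow 2)) L) omeas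
        (fun p _ => by nlinarith [sq_nonneg (d2 w₁ p)])
    rw [hMdef, hWdef, gradNrmSq]
    calc ∫ p in Omg L, (w₂ p) ^ 2 ≤ ∫ p in Omg L, (d2 w₂ p) ^ 2 := hp1
      _ = ∫ p in Omg L, (d1 w₁ p) ^ 2 := heq
      _ ≤ ∫ p in Omg L, ((d1 w₁ p) ^ 2 + (d2 w₁ p) ^ 2) := hle2
  -- Step 5: combine
  have hI4 : I ^ 4 ≤ A ^ 2 * (W * B) := by
    have s1 : (I ^ 2) ^ 2 ≤ (A * P) ^ 2 := pow_le_pow_left₀ (sq_nonneg I) hI2 2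
    have s3 : A ^ 2 * P ^ 2 ≤ A ^ 2 * (M * B) :=
      mul_le_mul_of_nonneg_left hPsq (by positivity)
    have s4 : A ^ 2 * (M * B) ≤ A ^ 2 * (W * B) := by
      have : M * B ≤ W * B := mul_le_mul_of_nonneg_right hM_le hB0
      exact mul_le_mul_of_nonneg_left this (by positivity)
    calc I ^ 4 = (I ^ 2) ^ 2 := by ring
      _ ≤ (A * P) ^ 2 := s1
      _ = A ^ 2 * P ^ 2 := by ring
      _ ≤ A ^ 2 * (M * B) := s3
      _ ≤ A ^ 2 * (W * B) := s4
  -- Step 6: arithmetic (AM-GM)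
  have hconst : A ^ 2 * (W * B)
      = 64 * (κ / 20 * A) ^ 2 * (ν / 20 * B) * (125 / (ν * κ ^ 2) * W) := by
    field_simp
    ring
  have hfin : I ^ 4 ≤ 64 * (κ / 20 * A) ^ 2 * (ν / 20 * B) * (125 / (ν * κ ^ 2) * W) := by
    rw [← hconst]; exact hI4
  exact amgm4 hI0 (by positivity) (by positivity) (by positivity) hfin
end
end
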